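/- arXiv:2312.08297 — 3 statements merged into one kernel-verified Lean document; each statement's English description precedes it below -/
import Mathlib

section
/- Let (X,d,m) be a compact Ahlfors Q-regular space and let 0 < s < 1. For x, w ∈ X and y > 0 define S(x,w,y) := Σ_{j∈ℤ} Σ_{k=0}^∞ 2^{−[(Q+1)k + Q·s·j]} · m( B_d(x,2^j) ∩ B_d(w, 2^k y) ). Then there exist constants 0 < c1 ≤ c2 < ∞, depending only on X, Q and s, such that for all x, w ∈ X and all y > 0: c1 · S(w,x,y) ≤ S(x,w,y) ≤ c2 · S(w,x,y). -/
noncomputable section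

open MeasureTheory ENNReal NNReal

/-- The potential `K*f(x) = ∫ K(x,y) f(y) dm(y)` of a function `f` w.r.t. a kernel `K`. -/
def potential {X : Type*} [MeasurableSpace X] (m : Measure X)
    (K : X → X → ℝ) (f : X → ℝ) (x : X) : ℝ :=
  ∫ y, K x y * f y ∂m

/-- The `L^p` capacity of a set `E` associated to a kernel `K`:
`C_{K,p}(E) = inf { ‖f‖_p^p : f ∈ L^p, K*f ≥ 1 on E }`. -/
def capacity {X : Type*} [MeasurableSpace X] (m : Measure X)
    (K : X → X → ℝ) (p : ℝ) (E : Set X) : ℝ≥0∞ :=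
  ⨅ (f : X → ℝ) (_ : MemLp f (ENNReal.ofReal p) m ∧ ∀ x ∈ E, 1 ≤ potential m K f x),
    eLpNorm f (ENNReal.ofReal p) m ^ p

/-- The Riesz kernel `K_{X,s}(x,y) = d(x,y)^{-Qs}`. -/
def rieszKernel {X : Type*} [MetricSpace X] (Q s : ℝ) (x y : X) : ℝ :=
  dist x y ^ (-(Q * s))

/-- `(X,d,m)` is Ahlfors `Q`-regular: `c₁ r^Q ≤ m(B(x,r)) ≤ c₂ r^Q` for `0 < r < diam X`. -/
def IsAhlfors {X : Type*} [MetricSpace X] [MeasurableSpace X] (m : Measure X) (Q : ℝ) : Prop :=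
  ∃ c₁ c₂ : ℝ, 0 < c₁ ∧ c₁ ≤ c₂ ∧ ∀ (x : X) (r : ℝ), 0 < r →
    r < Metric.diam (Set.univ : Set X) →
    ENNReal.ofReal (c₁ * r ^ Q) ≤ m (Metric.ball x r) ∧
      m (Metric.ball x r) ≤ ENNReal.ofReal (c₂ * r ^ Q)

/-- The set appearing in the definition of the Aikawa–Borichev radius
`η_{X,p}(x,r)`: radii `R > 0` with `m(B(x,R)) ≥ C_{K_{X,s},p}(B(x,r))`. -/
def etaSet {X : Type*} [MetricSpace X] [MeasurableSpace X] (m : Measure X)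
    (Q s p : ℝ) (x : X) (r : ℝ) : Set ℝ :=
  {R : ℝ | 0 < R ∧ capacity m (rieszKernel Q s) p (Metric.ball x r) ≤ m (Metric.ball x R)}

/-- The Aikawa–Borichev radius `η*_{X,p}(x,r) = max (r, η_{X,p}(x,r))`. -/
def etaStar {X : Type*} [MetricSpace X] [MeasurableSpace X] (m : Measure X)
    (Q s p : ℝ) (x : X) (r : ℝ) : ℝ :=
  max r (sInf (etaSet m Q s p x r))

/-- The (unnormalized) dyadic Poisson kernel
`y^{-Q} Σ_k 2^{-(Q+1)k} χ_{B(x,2^k y)}(z)`. -/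
def dyadicPoissonKernel {X : Type*} [MetricSpace X] (Q : ℝ) (x : X) (y : ℝ) (z : X) : ℝ :=
  y ^ (-Q) * ∑' k : ℕ, (2 : ℝ) ^ (-((Q + 1) * (k : ℝ))) *
    (Metric.ball x (2 ^ k * y)).indicator (fun _ => (1 : ℝ)) z

/-- The dyadic Poisson integral `PI(g)(x,y)` on `X × (0,∞)`. -/
def PI {X : Type*} [MetricSpace X] [MeasurableSpace X] (m : Measure X) (Q : ℝ)
    (g : X → ℝ) (x : X) (y : ℝ) : ℝ :=
  (∫ z, dyadicPoissonKernel Q x y z ∂m)⁻¹ * ∫ z, dyadicPoissonKernel Q x y z * g z ∂m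


/-- The double sum
`S(x,w,y) = Σ_{j∈ℤ} Σ_{k∈ℕ} 2^{-[(Q+1)k + Qsj]} m(B(x,2^j) ∩ B(w,2^k y))`. -/
def Ssum {X : Type*} [MetricSpace X] [MeasurableSpace X] (m : Measure X)
    (Q s : ℝ) (x w : X) (y : ℝ) : ℝ≥0∞ :=
  ∑' (j : ℤ) (k : ℕ),
    ENNReal.ofReal ((2 : ℝ) ^ (-((Q + 1) * (k : ℝ) + Q * s * (j : ℝ)))) *
      m (Metric.ball x ((2 : ℝ) ^ j) ∩ Metric.ball w (2 ^ k * y))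

lemma swap_mea {X : Type*} [MetricSpace X] [MeasurableSpace X] (m : Measure X)
    {c₁ c₂' Δ Q : ℝ} (hc₁ : 0 < c₁) (hc₂' : 0 ≤ c₂')
    (lower : ∀ (p : X) (ρ : ℝ), 0 < ρ →
      ENNReal.ofReal (c₁ * min ρ (Δ/2) ^ Q) ≤ m (Metric.ball p ρ))
    (upper : ∀ (p : X) (ρ : ℝ), 0 < ρ →
      m (Metric.ball p ρ) ≤ ENNReal.ofReal (c₂' * min ρ (Δ/2) ^ Q)) :
    ∀ (u v : X) (r R : ℝ), 0 < r → 0 < R →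
      m (Metric.ball u r ∩ Metric.ball v R) ≤
        ENNReal.ofReal (c₂'/c₁) * m (Metric.ball v (4*r) ∩ Metric.ball u (4*R)) := by
  have key : ∀ (u v : X) (r R : ℝ), 0 < r → 0 < R → r ≤ R →
      m (Metric.ball u r ∩ Metric.ball v R) ≤
        ENNReal.ofReal (c₂'/c₁) * m (Metric.ball v (4*r) ∩ Metric.ball u (4*R)) := by
    intro u v r R hr hR hrR
    rcases (Metric.ball u r ∩ Metric.ball v R).eq_empty_or_nonempty with he | ⟨z₀, hz₀⟩
    · rw [he, measure_empty]; positivity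
    · have hz₀u : dist z₀ u < r := Metric.mem_ball.1 hz₀.1
      have hz₀v : dist z₀ v < R := Metric.mem_ball.1 hz₀.2
      have hsub : Metric.ball v r ⊆ Metric.ball v (4*r) ∩ Metric.ball u (4*R) := by
        intro z hz
        have hzv : dist z v < r := Metric.mem_ball.1 hz
        constructor
        · exact Metric.mem_ball.2 (by linarith)
        · have := dist_triangle4 z v z₀ u
          rw [dist_comm v z₀] at this
          exact Metric.mem_ball.2 (by linarith)
      calc m (Metric.ball u r ∩ Metric.ball v R) ≤ m (Metric.ball u r) :=
            measure_mono Set.inter_subset_left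
        _ ≤ ENNReal.ofReal (c₂' * min r (Δ/2) ^ Q) := upper u r hr
        _ = ENNReal.ofReal (c₂'/c₁) * ENNReal.ofReal (c₁ * min r (Δ/2) ^ Q) := by
            rw [← ENNReal.ofReal_mul (by positivity)]
            congr 1
            field_simp
        _ ≤ ENNReal.ofReal (c₂'/c₁) * m (Metric.ball v r) :=
            mul_le_mul_right (lower v r hr) _
        _ ≤ ENNReal.ofReal (c₂'/c₁) * m (Metric.ball v (4*r) ∩ Metric.ball u (4*R)) :=
            mul_le_mul_right (measure_mono hsub) _
  intro u v r R hr hR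
  rcases le_total r R with h | h
  · exact key u v r R hr hR h
  · rw [Set.inter_comm, Set.inter_comm (Metric.ball v (4*r))]
    exact key v u R r hR hr h

/-- **Symmetry, up to constants, of the dyadic double sum.**  On a compact
Ahlfors `Q`-regular space, for `0 < s < 1` there are `0 < c₁ ≤ c₂ < ∞`
depending only on `X`, `Q` and `s` such that for all `x, w ∈ X` and `y > 0`:
`c₁ S(w,x,y) ≤ S(x,w,y) ≤ c₂ S(w,x,y)`. -/
theorem dyadic_double_sum_symmetric_comparable
    {X : Type*} [MetricSpace X] [CompactSpace X] [MeasurableSpace X] [BorelSpace X]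
    (m : Measure X) (Q : ℝ) (hQ : 0 < Q) (hAhl : IsAhlfors m Q)
    (s : ℝ) (hs0 : 0 < s) (hs1 : s < 1) :
    ∃ c₁ c₂ : ℝ, 0 < c₁ ∧ c₁ ≤ c₂ ∧
      ∀ (x w : X) (y : ℝ), 0 < y →
        ENNReal.ofReal c₁ * Ssum m Q s w x y ≤ Ssum m Q s x w y ∧
          Ssum m Q s x w y ≤ ENNReal.ofReal c₂ * Ssum m Q s w x y := by
  set Δ := Metric.diam (Set.univ : Set X) with hΔdef
  rcases le_or_gt Δ 0 with hΔ | hΔ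
  · refine ⟨1, 1, one_pos, le_refl 1, ?_⟩
    intro x w y hy
    have hxw : x = w := by
      have hb : Bornology.IsBounded (Set.univ : Set X) := isCompact_univ.isBounded
      have h1 := Metric.dist_le_diam_of_mem hb (Set.mem_univ x) (Set.mem_univ w)
      exact dist_le_zero.1 (h1.trans hΔ)
    subst hxw
    simp
  · obtain ⟨a₁, a₂, ha₁, ha₁₂, hA⟩ := hAhl
    have hMfin : m Set.univ ≠ ⊤ := by
      obtain ⟨t, ht⟩ := isCompact_univ.elim_finite_subcover
        (fun p : X => Metric.ball p (Δ/2)) (fun p => Metric.isOpen_ball)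
        (fun z _ => Set.mem_iUnion.2 ⟨z, Metric.mem_ball_self (by linarith)⟩)
      have h1 : m Set.univ ≤ ∑ i ∈ t, m (Metric.ball i (Δ/2)) :=
        (measure_mono ht).trans (measure_biUnion_finset_le t _)
      have h2 : ∑ i ∈ t, m (Metric.ball i (Δ/2)) < ⊤ := by
        refine ENNReal.sum_lt_top.2 fun i _ => ?_
        exact ((hA i (Δ/2) (by linarith) (by linarith)).2).trans_lt ENNReal.ofReal_lt_top
      exact (h1.trans_lt h2).ne
    set Mr := (m Set.univ).toReal with hMr
    have hMr0 : 0 ≤ Mr := ENNReal.toReal_nonneg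
    have hhalf : (0:ℝ) < Δ/2 := by linarith
    have hpow : (0:ℝ) < (Δ/2) ^ Q := Real.rpow_pos_of_pos hhalf Q
    set c₂' := max a₂ (Mr / ((Δ/2) ^ Q)) with hc₂'def
    have ha₂c : a₂ ≤ c₂' := le_max_left _ _
    have hc₂'0 : 0 ≤ c₂' := le_trans (le_of_lt (lt_of_lt_of_le ha₁ ha₁₂)) ha₂c
    have lower : ∀ (p : X) (ρ : ℝ), 0 < ρ →
        ENNReal.ofReal (a₁ * min ρ (Δ/2) ^ Q) ≤ m (Metric.ball p ρ) := by
      intro p ρ hρ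
      have h1 : 0 < min ρ (Δ/2) := lt_min hρ hhalf
      have h2 : min ρ (Δ/2) < Δ := lt_of_le_of_lt (min_le_right _ _) (by linarith)
      exact ((hA p _ h1 h2).1).trans (measure_mono (Metric.ball_subset_ball (min_le_left _ _)))
    have upper : ∀ (p : X) (ρ : ℝ), 0 < ρ →
        m (Metric.ball p ρ) ≤ ENNReal.ofReal (c₂' * min ρ (Δ/2) ^ Q) := by
      intro p ρ hρ
      rcases lt_or_ge ρ (Δ/2) with h | h
      · rw [min_eq_left h.le]
        refine ((hA p ρ hρ (by linarith)).2).trans (ENNReal.ofReal_le_ofReal ?_)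
        exact mul_le_mul_of_nonneg_right ha₂c (Real.rpow_pos_of_pos hρ Q).le
      · rw [min_eq_right h]
        have h1 : m (Metric.ball p ρ) ≤ m Set.univ := measure_mono (Set.subset_univ _)
        rw [(ENNReal.ofReal_toReal hMfin).symm.trans rfl] at h1
        refine h1.trans (ENNReal.ofReal_le_ofReal ?_)
        calc Mr = (Mr / ((Δ/2)^Q)) * (Δ/2)^Q := by field_simp
          _ ≤ c₂' * (Δ/2)^Q := mul_le_mul_of_nonneg_right (le_max_right _ _) hpow.le
    set C := c₂' / a₁ with hC
    have hC0 : 0 ≤ C := div_nonneg hc₂'0 ha₁.le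
    set C'' := (2:ℝ) ^ (2*(Q+1) + 2*(Q*s)) with hC''
    have hC''0 : 0 < C'' := Real.rpow_pos_of_pos two_pos _
    have hswap := swap_mea m ha₁ hc₂'0 lower upper
    have key : ∀ (x w : X) (y : ℝ), 0 < y →
        Ssum m Q s x w y ≤ ENNReal.ofReal (C * C'') * Ssum m Q s w x y := by
      intro x w y hy
      set G : ℤ → ℕ → ℝ≥0∞ := fun j k =>
        ENNReal.ofReal ((2 : ℝ) ^ (-((Q + 1) * (k : ℝ) + Q * s * (j : ℝ)))) *
          m (Metric.ball w ((2 : ℝ) ^ j) ∩ Metric.ball x (2 ^ k * y)) with hG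
      have hterm : ∀ (j : ℤ) (k : ℕ),
          ENNReal.ofReal ((2 : ℝ) ^ (-((Q + 1) * (k : ℝ) + Q * s * (j : ℝ)))) *
            m (Metric.ball x ((2 : ℝ) ^ j) ∩ Metric.ball w (2 ^ k * y)) ≤
          ENNReal.ofReal (C * C'') * G (j+2) (k+2) := by
        intro j k
        have hr : (0:ℝ) < (2:ℝ) ^ j := by positivity
        have hR : (0:ℝ) < (2:ℝ) ^ k * y := by positivity
        have hball1 : Metric.ball w ((2:ℝ) ^ (j+2 : ℤ)) = Metric.ball w (4 * (2:ℝ)^j) := by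
          congr 1
          rw [zpow_add₀ (two_ne_zero : (2:ℝ) ≠ 0)]
          norm_num
          ring
        have hball2 : Metric.ball x ((2:ℝ) ^ (k+2) * y) = Metric.ball x (4 * ((2:ℝ)^k * y)) := by
          congr 1
          rw [pow_add]
          ring
        have hwt : (2 : ℝ) ^ (-((Q + 1) * (k : ℝ) + Q * s * (j : ℝ))) =
            C'' * (2 : ℝ) ^ (-((Q + 1) * ((k+2 : ℕ) : ℝ) + Q * s * ((j+2 : ℤ) : ℝ))) := by
          rw [hC'', ← Real.rpow_add two_pos]
          congr 1
          push_cast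
          ring
        have hwt'0 : (0:ℝ) ≤ (2 : ℝ) ^ (-((Q + 1) * ((k+2 : ℕ) : ℝ) + Q * s * ((j+2 : ℤ) : ℝ))) :=
          (Real.rpow_pos_of_pos two_pos _).le
        have habc : ∀ (a b c T S : ℝ≥0∞), S ≤ c * T → b * a * S ≤ c * b * (a * T) := by
          intro a b c T S h
          calc b * a * S ≤ b * a * (c * T) := mul_le_mul_right h _
            _ = c * b * (a * T) := by ring
        rw [hG]
        simp only []
        rw [hball1, hball2, hwt]
        rw [ENNReal.ofReal_mul hC''0.le, ENNReal.ofReal_mul hC0]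
        exact habc _ _ _ _ _ (hswap x w _ _ hr hR)
      have hsum : (∑' (j : ℤ) (k : ℕ), G (j+2) (k+2)) ≤ ∑' (j : ℤ) (k : ℕ), G j k := by
        rw [← ENNReal.tsum_prod (f := fun j k => G (j+2) (k+2)), ← ENNReal.tsum_prod (f := G)]
        have hinj : Function.Injective (fun p : ℤ × ℕ => ((p.1 + 2, p.2 + 2) : ℤ × ℕ)) := by
          intro p q h
          simp only [Prod.mk.injEq] at h
          obtain ⟨h1, h2⟩ := h
          exact Prod.ext (by omega) (by omega)
        exact tsum_comp_le_tsum_of_injective hinj (fun p => G p.1 p.2)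
      calc Ssum m Q s x w y
          ≤ ∑' (j : ℤ) (k : ℕ), ENNReal.ofReal (C * C'') * G (j+2) (k+2) :=
            ENNReal.tsum_le_tsum fun j => ENNReal.tsum_le_tsum fun k => hterm j k
        _ = ENNReal.ofReal (C * C'') * ∑' (j : ℤ) (k : ℕ), G (j+2) (k+2) := by
            simp only [ENNReal.tsum_mul_left]
        _ ≤ ENNReal.ofReal (C * C'') * ∑' (j : ℤ) (k : ℕ), G j k :=
            mul_le_mul_right hsum _
        _ = ENNReal.ofReal (C * C'') * Ssum m Q s w x y := rfl
    set Ct := max 1 (C * C'') with hCt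
    have hCt1 : (1:ℝ) ≤ Ct := le_max_left _ _
    have hCt0 : (0:ℝ) < Ct := lt_of_lt_of_le one_pos hCt1
    have key' : ∀ (x w : X) (y : ℝ), 0 < y →
        Ssum m Q s x w y ≤ ENNReal.ofReal Ct * Ssum m Q s w x y := fun x w y hy =>
      (key x w y hy).trans (mul_le_mul_left (ENNReal.ofReal_le_ofReal (le_max_right _ _)) _)
    have hinv1 : Ct⁻¹ ≤ 1 := inv_le_one_of_one_le₀ hCt1
    refine ⟨Ct⁻¹, Ct, inv_pos.2 hCt0, hinv1.trans hCt1, ?_⟩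
    intro x w y hy
    constructor
    · have h := key' w x y hy
      calc ENNReal.ofReal Ct⁻¹ * Ssum m Q s w x y
          ≤ ENNReal.ofReal Ct⁻¹ * (ENNReal.ofReal Ct * Ssum m Q s x w y) := mul_le_mul_right h _
        _ = ENNReal.ofReal (Ct⁻¹ * Ct) * Ssum m Q s x w y := by
            rw [ENNReal.ofReal_mul (inv_nonneg.2 hCt0.le), mul_assoc]
        _ = Ssum m Q s x w y := by
            rw [inv_mul_cancel₀ hCt0.ne', ENNReal.ofReal_one, one_mul]
    · exact key' x w y hy


end
end

section
/- Let (X,d,m) be a compact Ahlfors Q-regular space, let p > 1 with 1/p + 1/p' = 1, and let 1/p' ≤ s < 1. Then there exist constants 0 < c1 ≤ c2 < ∞, depending only on X, Q and s, such that for every nonnegative f ∈ L^p(X,m), every x ∈ X and every y > 0: c1 · PI(K_{X,s}*f)(x,y) ≤ ( K_{X,s} * (PI(f)(·,y)) )(x) ≤ c2 · PI(K_{X,s}*f)(x,y); that is, applying first the dyadic Poisson integral at height y and then the Riesz potential is comparable to applying them in the opposite order. -/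
noncomputable section

open MeasureTheory ENNReal NNReal

namespace RPPI
open Metric Set Filter
set_option linter.unusedSectionVars false

variable {X : Type*} [MetricSpace X] [MeasurableSpace X] [BorelSpace X]

/-- ENNReal Riesz kernel with exponent `α`. -/
def ker (α : ℝ) (a z : X) : ℝ≥0∞ := ENNReal.ofReal (dist a z ^ (-α))

lemma ker_symm (α : ℝ) (a z : X) : ker α a z = ker α z a := by
  unfold ker; rw [dist_comm]

lemma ker_ne_top (α : ℝ) (a z : X) : ker α a z ≠ ⊤ := ENNReal.ofReal_ne_top

lemma ofReal_riesz (Q s : ℝ) (a z : X) :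
    ENNReal.ofReal (rieszKernel Q s a z) = ker (Q * s) a z := rfl

lemma riesz_nonneg (Q s : ℝ) (a z : X) : 0 ≤ rieszKernel Q s a z :=
  Real.rpow_nonneg dist_nonneg _

variable [CompactSpace X]

lemma measurable_ker (α : ℝ) (a : X) : Measurable fun z : X => ker α a z :=
  ENNReal.measurable_ofReal.comp ((measurable_const.dist measurable_id).pow measurable_const)

lemma measurable_ker2 (α : ℝ) : Measurable fun p : X × X => ker α p.1 p.2 :=
  ENNReal.measurable_ofReal.comp (measurable_dist.pow measurable_const)

lemma measurable_riesz (Q s : ℝ) (a : X) : Measurable fun z : X => rieszKernel Q s a z :=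
  (measurable_const.dist measurable_id).pow measurable_const

/-- geometric ratio -/
def eQ (Q : ℝ) : ℝ≥0∞ := ENNReal.ofReal ((2:ℝ) ^ (-(Q+1)))

lemma eQ_lt_one {Q : ℝ} (hQ : 0 < Q) : eQ Q < 1 := by
  rw [eQ, ENNReal.ofReal_lt_one]
  exact Real.rpow_lt_one_of_one_lt_of_neg one_lt_two (by linarith)

lemma eQ_ne_top (Q : ℝ) : eQ Q ≠ ⊤ := ENNReal.ofReal_ne_top

lemma ofReal_coeff (Q : ℝ) (k : ℕ) :
    ENNReal.ofReal ((2:ℝ) ^ (-((Q + 1) * (k : ℝ)))) = eQ Q ^ k := by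
  rw [eQ, ← ENNReal.ofReal_pow (Real.rpow_nonneg (by norm_num) _)]
  congr 1
  rw [← Real.rpow_natCast ((2:ℝ) ^ (-(Q+1))) k, ← Real.rpow_mul (by norm_num)]
  ring_nf

/-- ENNReal dyadic Poisson kernel. -/
def pker (Q y : ℝ) (x z : X) : ℝ≥0∞ :=
  ENNReal.ofReal (y ^ (-Q)) *
    ∑' k : ℕ, eQ Q ^ k * (Metric.ball x (2 ^ k * y)).indicator (fun _ => (1:ℝ≥0∞)) z

lemma poissonKernel_nonneg {Q y : ℝ} (hy : 0 < y) (x z : X) : 0 ≤ dyadicPoissonKernel Q x y z := by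
  apply mul_nonneg (Real.rpow_nonneg hy.le _)
  apply tsum_nonneg
  intro k
  exact mul_nonneg (Real.rpow_nonneg (by norm_num) _) (Set.indicator_nonneg (fun _ _ => zero_le_one) _)

lemma summable_poisson (Q : ℝ) (hQ : 0 < Q) (x z : X) (y : ℝ) :
    Summable fun k : ℕ => (2 : ℝ) ^ (-((Q + 1) * (k : ℝ))) *
      (Metric.ball x (2 ^ k * y)).indicator (fun _ => (1 : ℝ)) z := by
  have hbase : (0:ℝ) ≤ (2:ℝ) ^ (-(Q+1)) := Real.rpow_nonneg (by norm_num) _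
  have hlt : ((2:ℝ) ^ (-(Q+1))) < 1 :=
    Real.rpow_lt_one_of_one_lt_of_neg one_lt_two (by linarith)
  refine Summable.of_nonneg_of_le
    (fun k => mul_nonneg (Real.rpow_nonneg (by norm_num) _)
      (Set.indicator_nonneg (fun _ _ => zero_le_one) _))
    (fun k => ?_) (summable_geometric_of_lt_one hbase hlt)
  have hind : (Metric.ball x (2 ^ k * y)).indicator (fun _ => (1 : ℝ)) z ≤ 1 := by
    by_cases hz : z ∈ Metric.ball x (2 ^ k * y) <;> simp [hz]
  have : (2 : ℝ) ^ (-((Q + 1) * (k : ℝ))) = ((2:ℝ) ^ (-(Q+1))) ^ k := by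
    rw [← Real.rpow_natCast ((2:ℝ) ^ (-(Q+1))) k, ← Real.rpow_mul (by norm_num)]
    ring_nf
  calc (2 : ℝ) ^ (-((Q + 1) * (k : ℝ))) * (Metric.ball x (2 ^ k * y)).indicator (fun _ => (1 : ℝ)) z
      ≤ (2 : ℝ) ^ (-((Q + 1) * (k : ℝ))) * 1 :=
        mul_le_mul_of_nonneg_left hind (Real.rpow_nonneg (by norm_num) _)
    _ = ((2:ℝ) ^ (-(Q+1))) ^ k := by rw [mul_one, this]

lemma ofReal_poisson {Q y : ℝ} (hQ : 0 < Q) (hy : 0 < y) (x z : X) :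
    ENNReal.ofReal (dyadicPoissonKernel Q x y z) = pker Q y x z := by
  rw [dyadicPoissonKernel, pker, ENNReal.ofReal_mul (Real.rpow_nonneg hy.le _)]
  congr 1
  rw [ENNReal.ofReal_tsum_of_nonneg
    (fun k => mul_nonneg (Real.rpow_nonneg (by norm_num) _)
      (Set.indicator_nonneg (fun _ _ => zero_le_one) _)) (summable_poisson Q hQ x z y)]
  apply tsum_congr
  intro k
  rw [ENNReal.ofReal_mul (Real.rpow_nonneg (by norm_num) _), ofReal_coeff]
  congr 1
  by_cases hz : z ∈ Metric.ball x (2 ^ k * y) <;> simp [hz]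


lemma pker_symm (Q y : ℝ) (x z : X) : pker Q y x z = pker Q y z x := by
  unfold pker
  congr 1
  apply tsum_congr; intro k
  congr 1
  by_cases h : z ∈ Metric.ball x (2^k*y)
  · rw [Set.indicator_of_mem h, Set.indicator_of_mem (Metric.mem_ball_comm.mp h)]
  · rw [Set.indicator_of_notMem h,
      Set.indicator_of_notMem (fun h' => h (Metric.mem_ball_comm.mp h'))]

lemma measurable_pker2 (Q y : ℝ) : Measurable fun p : X × X => pker Q y p.1 p.2 := by
  unfold pker
  apply Measurable.const_mul
  apply Measurable.ennreal_tsum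
  intro k
  apply Measurable.const_mul
  classical
  have heq : (fun p : X × X => (Metric.ball p.1 (2 ^ k * y)).indicator (fun _ => (1:ℝ≥0∞)) p.2)
      = (fun p : X × X => if dist p.2 p.1 < 2 ^ k * y then (1:ℝ≥0∞) else 0) := by
    funext p; rw [Set.indicator_apply]
    simp only [Metric.mem_ball, dist_comm]
  rw [heq]
  exact Measurable.ite (measurableSet_lt (measurable_snd.dist measurable_fst) measurable_const)
    measurable_const measurable_const

lemma measurable_pker (Q y : ℝ) (x : X) : Measurable fun z : X => pker Q y x z :=
  (measurable_pker2 Q y).comp (measurable_const.prodMk measurable_id)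

lemma pker_le {Q : ℝ} (hQ : 0 < Q) (y : ℝ) (x z : X) :
    pker Q y x z ≤ ENNReal.ofReal (y ^ (-Q)) * (1 - eQ Q)⁻¹ := by
  unfold pker
  apply mul_le_mul_right
  rw [← ENNReal.tsum_geometric (eQ Q)]
  apply ENNReal.tsum_le_tsum
  intro k
  by_cases hz : z ∈ Metric.ball x (2^k*y) <;> simp [hz]

lemma pker_lt_top {Q : ℝ} (hQ : 0 < Q) (y : ℝ) (x z : X) : pker Q y x z < ⊤ := by
  refine (pker_le hQ y x z).trans_lt ?_
  apply ENNReal.mul_lt_top ENNReal.ofReal_lt_top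
  rw [ENNReal.inv_lt_top]
  exact tsub_pos_iff_lt.mpr (eQ_lt_one hQ)

def Anorm (m : Measure X) (Q y : ℝ) (z : X) : ℝ≥0∞ := ∫⁻ w, pker Q y z w ∂m

lemma Anorm_eq (m : Measure X) (Q y : ℝ) (z : X) :
    Anorm m Q y z
      = ENNReal.ofReal (y ^ (-Q)) * ∑' k : ℕ, eQ Q ^ k * m (Metric.ball z (2 ^ k * y)) := by
  unfold Anorm pker
  rw [lintegral_const_mul' _ _ ENNReal.ofReal_ne_top]
  congr 1
  rw [lintegral_tsum (fun k =>
    ((measurable_const.indicator measurableSet_ball).const_mul _).aemeasurable)]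
  apply tsum_congr; intro k
  rw [lintegral_const_mul' _ _ (ENNReal.pow_ne_top (eQ_ne_top Q))]
  congr 1
  rw [lintegral_indicator measurableSet_ball, setLIntegral_one]

lemma measurable_Anorm (m : Measure X) [SFinite m] (Q y : ℝ) :
    Measurable fun z => Anorm m Q y z :=
  Measurable.lintegral_prod_right' (measurable_pker2 Q y)


section MeasureFacts
variable (m : Measure X) (Q : ℝ)

lemma measure_univ_lt_top' (c₂ : ℝ) (hD : 0 < Metric.diam (Set.univ : Set X))
    (hup : ∀ (x : X) (r : ℝ), 0 < r → r < Metric.diam (Set.univ : Set X) →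
      m (Metric.ball x r) ≤ ENNReal.ofReal (c₂ * r ^ Q)) :
    m Set.univ < ⊤ := by
  obtain ⟨t, ht⟩ := isCompact_univ.elim_finite_subcover
    (fun x : X => Metric.ball x (Metric.diam (Set.univ : Set X)/2))
    (fun _ => Metric.isOpen_ball)
    (fun x _ => Set.mem_iUnion.mpr ⟨x, Metric.mem_ball_self (by linarith)⟩)
  refine (measure_mono ht).trans_lt ?_
  refine (measure_biUnion_finset_le t _).trans_lt ?_
  refine ENNReal.sum_lt_top.mpr fun i _ => ?_
  exact (hup i _ (by linarith) (by linarith)).trans_lt ENNReal.ofReal_lt_top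

lemma measure_singleton_zero (c₂ : ℝ) (hQ : 0 < Q) (hc₂ : 0 < c₂)
    (hD : 0 < Metric.diam (Set.univ : Set X))
    (hup : ∀ (x : X) (r : ℝ), 0 < r → r < Metric.diam (Set.univ : Set X) →
      m (Metric.ball x r) ≤ ENNReal.ofReal (c₂ * r ^ Q)) (b : X) : m {b} = 0 := by
  set D := Metric.diam (Set.univ : Set X) with hDdef
  have key : ∀ ρ : ℝ, 0 < ρ → ρ ≤ D/2 → m {b} ≤ ENNReal.ofReal (c₂ * ρ ^ Q) := by
    intro ρ h1 h2
    refine (measure_mono ?_).trans (hup b ρ h1 (by linarith))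
    intro z hz; simp only [Set.mem_singleton_iff] at hz
    simp [hz, Metric.mem_ball, h1]
  by_contra hne
  have hpos : 0 < m {b} := pos_iff_ne_zero.mpr hne
  have hfin : m {b} < ⊤ := (key (D/2) (by linarith) le_rfl).trans_lt ENNReal.ofReal_lt_top
  set ε := (m {b}).toReal with hε
  have hε0 : 0 < ε := ENNReal.toReal_pos hne hfin.ne
  set ρ := min (D/2) ((ε/(2*c₂)) ^ (1/Q)) with hρdef
  have hρ0 : 0 < ρ := lt_min (by linarith) (Real.rpow_pos_of_pos (by positivity) _)
  have hle : ε ≤ c₂ * ρ ^ Q := by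
    have h1 := key ρ hρ0 (min_le_left _ _)
    have h2 : (m {b}).toReal ≤ (ENNReal.ofReal (c₂ * ρ^Q)).toReal :=
      ENNReal.toReal_mono ENNReal.ofReal_ne_top h1
    rwa [ENNReal.toReal_ofReal (by positivity)] at h2
  have hlt : c₂ * ρ ^ Q ≤ c₂ * (ε/(2*c₂)) := by
    apply mul_le_mul_of_nonneg_left _ hc₂.le
    have h1 : ρ ≤ (ε/(2*c₂)) ^ (1/Q) := min_le_right _ _
    have h3 := Real.rpow_le_rpow hρ0.le h1 hQ.le
    have h2 : (((ε/(2*c₂)) ^ (1/Q)) : ℝ) ^ Q = ε/(2*c₂) := by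
      rw [← Real.rpow_mul (by positivity), one_div_mul_cancel hQ.ne', Real.rpow_one]
    rwa [h2] at h3
  have heq : c₂ * (ε/(2*c₂)) = ε/2 := by field_simp
  rw [heq] at hlt
  linarith

lemma annulus_arith (R α Q c' : ℝ) (hR : 0 < R) (j : ℕ) :
    (R/2^(j+1))^(-α) * (c' * (R/2^j)^Q)
      = (c' * 2^α * R^(Q-α)) * ((2:ℝ)^(-(Q-α)))^j := by
  have h2j : (0:ℝ) < 2^j := pow_pos two_pos j
  have hx : (0:ℝ) < R/2^j := by positivity
  have e1 : R/2^(j+1) = (R/2^j)/2 := by rw [pow_succ]; ring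
  have e2 : ((R/2^j)/2 : ℝ)^(-α) = (R/2^j)^(-α) * 2^α := by
    rw [Real.div_rpow hx.le (by norm_num : (0:ℝ) ≤ 2),
      Real.rpow_neg (by norm_num : (0:ℝ) ≤ 2) α, div_eq_mul_inv, inv_inv]
  have e3 : (R/2^j)^(-α) * (R/2^j)^Q = (R/2^j)^(Q-α) := by
    rw [← Real.rpow_add hx]; ring_nf
  have e4 : ((R/2^j):ℝ)^(Q-α) = R^(Q-α) * ((2:ℝ)^(-(Q-α)))^j := by
    rw [Real.div_rpow hR.le h2j.le]
    rw [← Real.rpow_natCast (2:ℝ) j, ← Real.rpow_mul (by norm_num : (0:ℝ) ≤ 2),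
      ← Real.rpow_natCast ((2:ℝ)^(-(Q-α))) j, ← Real.rpow_mul (by norm_num : (0:ℝ) ≤ 2),
      div_eq_mul_inv, ← Real.rpow_neg (by norm_num : (0:ℝ) ≤ 2)]
    ring_nf
  rw [e1, e2]
  have e5 : (R / 2 ^ j) ^ (-α) * 2 ^ α * (c' * (R / 2 ^ j) ^ Q)
      = (c' * 2^α) * ((R/2^j)^(-α) * (R/2^j)^Q) := by ring
  rw [e5, e3, e4]; ring

lemma Wpow_bound (α c' : ℝ) (hQ : 0 < Q) (hα0 : 0 < α) (hαQ : α < Q) (hc' : 0 < c')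
    (hD : 0 < Metric.diam (Set.univ : Set X))
    (hball : ∀ (b : X) (ρ : ℝ), 0 < ρ →
      m (Metric.ball b ρ) ≤ ENNReal.ofReal (c' * min ρ (Metric.diam (Set.univ : Set X)) ^ Q))
    (a : X) (R : ℝ) (hR : 0 < R) :
    ∫⁻ z in Metric.ball a R, ker α a z ∂m
      ≤ ENNReal.ofReal (c' * 2 ^ α / (1 - 2 ^ (-(Q - α))) * R ^ (Q - α)) := by
  set q := (2:ℝ)^(-(Q-α)) with hqdef
  have hq0 : 0 < q := Real.rpow_pos_of_pos two_pos _
  have hq1 : q < 1 := Real.rpow_lt_one_of_one_lt_of_neg one_lt_two (by linarith)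
  have hcover : Metric.ball a R ⊆
      {a} ∪ ⋃ j : ℕ, (Metric.ball a (R/2^j) \ Metric.ball a (R/2^(j+1))) := by
    intro z hz
    by_cases hza : z = a
    · left; simp [hza]
    · right
      have hd : 0 < dist a z := dist_pos.mpr (Ne.symm hza)
      have hdR : dist a z < R := by rw [dist_comm]; exact Metric.mem_ball.mp hz
      have hP : ∃ j : ℕ, R ≤ dist a z * 2 ^ (j+1) := by
        obtain ⟨n, hn⟩ := pow_unbounded_of_one_lt (R / dist a z) one_lt_two
        refine ⟨n, ?_⟩
        have := (div_lt_iff₀ hd).mp hn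
        have h2 : dist a z * 2 ^ n ≤ dist a z * 2 ^ (n+1) :=
          mul_le_mul_of_nonneg_left (pow_le_pow_right₀ (by norm_num) (Nat.le_succ n)) hd.le
        linarith
      have hj := Nat.find_spec hP
      set j := Nat.find hP with hjdef
      refine Set.mem_iUnion.mpr ⟨j, ?_, ?_⟩
      · rw [Metric.mem_ball, dist_comm]
        rcases Nat.eq_zero_or_pos j with hj0 | hjpos
        · rw [hj0]; simpa using hdR
        · have hmin := Nat.find_min hP (Nat.sub_lt hjpos one_pos)
          have hj1 : j - 1 + 1 = j := Nat.succ_pred_eq_of_pos hjpos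
          rw [hj1] at hmin
          push_neg at hmin
          rw [lt_div_iff₀ (pow_pos two_pos j)]
          linarith [hmin]
      · rw [Metric.mem_ball, dist_comm]
        push_neg
        rw [div_le_iff₀ (pow_pos two_pos (j+1))]
        linarith [hj]
  have hsing : ∫⁻ z in ({a} : Set X), ker α a z ∂m = 0 := by
    have h0 : ∫⁻ z in ({a} : Set X), ker α a z ∂m = ∫⁻ z in ({a} : Set X), 0 ∂m := by
      apply setLIntegral_congr_fun (measurableSet_singleton a)
      intro z hz
      rcases hz with rfl
      simp [ker, Real.zero_rpow (neg_ne_zero.mpr hα0.ne')]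
    rw [h0, lintegral_zero]
  have hstep : ∀ j : ℕ,
      ∫⁻ z in Metric.ball a (R/2^j) \ Metric.ball a (R/2^(j+1)), ker α a z ∂m
        ≤ ENNReal.ofReal ((c' * 2^α * R^(Q-α)) * q ^ j) := by
    intro j
    have h2j : (0:ℝ) < 2^j := pow_pos two_pos j
    have h2j1 : (0:ℝ) < 2^(j+1) := pow_pos two_pos (j+1)
    have hx : (0:ℝ) < R/2^j := by positivity
    have hx1 : (0:ℝ) < R/2^(j+1) := by positivity
    have hmeas : MeasurableSet (Metric.ball a (R/2^j) \ Metric.ball a (R/2^(j+1))) :=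
      measurableSet_ball.diff measurableSet_ball
    calc ∫⁻ z in Metric.ball a (R/2^j) \ Metric.ball a (R/2^(j+1)), ker α a z ∂m
        ≤ ∫⁻ _ in Metric.ball a (R/2^j) \ Metric.ball a (R/2^(j+1)),
            ENNReal.ofReal ((R/2^(j+1))^(-α)) ∂m := by
          refine setLIntegral_mono' hmeas fun z hz => ?_
          apply ENNReal.ofReal_le_ofReal
          have hge : R/2^(j+1) ≤ dist a z := by
            have := hz.2
            rw [Metric.mem_ball, dist_comm] at this
            exact not_lt.mp this
          exact Real.rpow_le_rpow_of_nonpos hx1 hge (neg_nonpos.mpr hα0.le)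
      _ = ENNReal.ofReal ((R/2^(j+1))^(-α))
            * m (Metric.ball a (R/2^j) \ Metric.ball a (R/2^(j+1))) := by
          rw [setLIntegral_const]
      _ ≤ ENNReal.ofReal ((R/2^(j+1))^(-α)) * ENNReal.ofReal (c' * (R/2^j)^Q) := by
          apply mul_le_mul_right
          refine (measure_mono Set.diff_subset).trans ((hball a _ hx).trans ?_)
          apply ENNReal.ofReal_le_ofReal
          apply mul_le_mul_of_nonneg_left _ hc'.le
          exact Real.rpow_le_rpow (le_min hx.le hD.le) (min_le_left _ _) hQ.le
      _ = ENNReal.ofReal ((R/2^(j+1))^(-α) * (c' * (R/2^j)^Q)) := by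
          rw [← ENNReal.ofReal_mul (Real.rpow_nonneg hx1.le _)]
      _ = ENNReal.ofReal ((c' * 2^α * R^(Q-α)) * q ^ j) := by
          rw [annulus_arith R α Q c' hR j]
  have hC0 : (0:ℝ) ≤ c' * 2^α * R^(Q-α) := by positivity
  have hsum : ∑' j : ℕ, ENNReal.ofReal ((c' * 2^α * R^(Q-α)) * q ^ j)
      = ENNReal.ofReal (c' * 2^α / (1 - q) * R^(Q-α)) := by
    have hterm : ∀ j : ℕ, ENNReal.ofReal ((c' * 2^α * R^(Q-α)) * q ^ j)
        = ENNReal.ofReal (c' * 2^α * R^(Q-α)) * (ENNReal.ofReal q) ^ j := by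
      intro j
      rw [ENNReal.ofReal_mul hC0, ENNReal.ofReal_pow hq0.le]
    rw [tsum_congr hterm, ENNReal.tsum_mul_left, ENNReal.tsum_geometric]
    have h1mq : (1:ℝ≥0∞) - ENNReal.ofReal q = ENNReal.ofReal (1 - q) := by
      rw [ENNReal.ofReal_sub _ hq0.le, ENNReal.ofReal_one]
    rw [h1mq, ← ENNReal.ofReal_inv_of_pos (by linarith), ← ENNReal.ofReal_mul hC0]
    congr 1
    ring
  calc ∫⁻ z in Metric.ball a R, ker α a z ∂m
      ≤ ∫⁻ z in {a} ∪ ⋃ j : ℕ, (Metric.ball a (R/2^j) \ Metric.ball a (R/2^(j+1))),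
          ker α a z ∂m := lintegral_mono_set hcover
    _ ≤ (∫⁻ z in ({a} : Set X), ker α a z ∂m)
        + ∫⁻ z in ⋃ j : ℕ, (Metric.ball a (R/2^j) \ Metric.ball a (R/2^(j+1))),
            ker α a z ∂m := lintegral_union_le _ _ _
    _ ≤ 0 + ∑' j : ℕ, ∫⁻ z in Metric.ball a (R/2^j) \ Metric.ball a (R/2^(j+1)),
            ker α a z ∂m := by
          rw [hsing]
          exact add_le_add le_rfl (lintegral_iUnion_le _ _)
    _ ≤ ∑' j : ℕ, ENNReal.ofReal ((c' * 2^α * R^(Q-α)) * q ^ j) := by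
          rw [zero_add]
          exact ENNReal.tsum_le_tsum hstep
    _ = ENNReal.ofReal (c' * 2^α / (1 - q) * R^(Q-α)) := hsum


lemma ball_univ' (a : X) {R : ℝ} (hR : Metric.diam (Set.univ : Set X) < R) :
    Metric.ball a R = Set.univ := by
  apply Set.eq_univ_of_forall; intro z
  rw [Metric.mem_ball]
  exact lt_of_le_of_lt (Metric.dist_le_diam_of_mem isCompact_univ.isBounded
    (Set.mem_univ z) (Set.mem_univ a)) hR

lemma W_bound (α c' : ℝ) (hQ : 0 < Q) (hα0 : 0 < α) (hαQ : α < Q) (hc' : 0 < c')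
    (hD : 0 < Metric.diam (Set.univ : Set X))
    (hball : ∀ (b : X) (ρ : ℝ), 0 < ρ →
      m (Metric.ball b ρ) ≤ ENNReal.ofReal (c' * min ρ (Metric.diam (Set.univ : Set X)) ^ Q))
    (a : X) (R : ℝ) (hR : 0 < R) :
    ∫⁻ z in Metric.ball a R, ker α a z ∂m
      ≤ ENNReal.ofReal (c' * 2 ^ α / (1 - 2 ^ (-(Q - α)))
          * (min R (2 * Metric.diam (Set.univ : Set X))) ^ (Q - α)) := by
  rcases le_or_gt R (2 * Metric.diam (Set.univ : Set X)) with hcase | hcase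
  · rw [min_eq_left hcase]
    exact Wpow_bound m Q α c' hQ hα0 hαQ hc' hD hball a R hR
  · have h2D : 0 < 2 * Metric.diam (Set.univ : Set X) := by linarith
    have hballs : Metric.ball a R = Metric.ball a (2 * Metric.diam (Set.univ : Set X)) := by
      rw [ball_univ' a (by linarith), ball_univ' a (by linarith)]
    rw [min_eq_right hcase.le, hballs]
    exact Wpow_bound m Q α c' hQ hα0 hαQ hc' hD hball a _ h2D

lemma ker_total (α c' : ℝ) (hQ : 0 < Q) (hα0 : 0 < α) (hαQ : α < Q) (hc' : 0 < c')
    (hD : 0 < Metric.diam (Set.univ : Set X))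
    (hball : ∀ (b : X) (ρ : ℝ), 0 < ρ →
      m (Metric.ball b ρ) ≤ ENNReal.ofReal (c' * min ρ (Metric.diam (Set.univ : Set X)) ^ Q))
    (a : X) :
    ∫⁻ z, ker α a z ∂m
      ≤ ENNReal.ofReal (c' * 2 ^ α / (1 - 2 ^ (-(Q - α)))
          * (2 * Metric.diam (Set.univ : Set X)) ^ (Q - α)) := by
  have h2D : 0 < 2 * Metric.diam (Set.univ : Set X) := by linarith
  have hW := W_bound m Q α c' hQ hα0 hαQ hc' hD hball a _ h2D
  rw [min_self] at hW
  refine le_trans (le_of_eq ?_) hW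
  rw [← setLIntegral_univ, ball_univ' a (by linarith)]

lemma J_lower (α c₁ : ℝ) (hQ : 0 < Q) (hα0 : 0 < α)
    (hD : 0 < Metric.diam (Set.univ : Set X))
    (hlow : ∀ (x : X) (r : ℝ), 0 < r → r < Metric.diam (Set.univ : Set X) →
      ENNReal.ofReal (c₁ * r ^ Q) ≤ m (Metric.ball x r))
    (hsing : ∀ b : X, m {b} = 0)
    (a b : X) (r : ℝ) (hr : 0 < r) :
    ENNReal.ofReal ((dist a b + min r (Metric.diam (Set.univ : Set X)/2)) ^ (-α)
        * (c₁ * (min r (Metric.diam (Set.univ : Set X)/2)) ^ Q))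
      ≤ ∫⁻ z in Metric.ball a r, ker α b z ∂m := by
  set D := Metric.diam (Set.univ : Set X) with hDdef
  set ρ := min r (D/2) with hρdef
  have hρ0 : 0 < ρ := lt_min hr (by linarith)
  have hρr : ρ ≤ r := min_le_left _ _
  have hρD : ρ < D := lt_of_le_of_lt (min_le_right _ _) (by linarith)
  refine le_trans ?_ (lintegral_mono_set (Metric.ball_subset_ball hρr))
  have hb : ∀ᵐ z ∂m, z ≠ b := by
    have h1 : {z : X | ¬ z ≠ b} = {b} := by ext z; simp
    rw [ae_iff, h1]; exact hsing b
  have hae : ∀ᵐ z ∂m, z ∈ Metric.ball a ρ →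
      ENNReal.ofReal ((dist a b + ρ) ^ (-α)) ≤ ker α b z := by
    filter_upwards [hb] with z hzb hzball
    apply ENNReal.ofReal_le_ofReal
    have h1 : 0 < dist b z := dist_pos.mpr (Ne.symm hzb)
    have h2 : dist b z ≤ dist a b + ρ := by
      have h3 : dist a z < ρ := Metric.mem_ball'.mp hzball
      calc dist b z ≤ dist b a + dist a z := dist_triangle b a z
        _ ≤ dist a b + ρ := by rw [dist_comm b a]; linarith
    exact Real.rpow_le_rpow_of_nonpos h1 h2 (neg_nonpos.mpr hα0.le)
  calc ENNReal.ofReal ((dist a b + ρ) ^ (-α) * (c₁ * ρ ^ Q))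
      = ENNReal.ofReal ((dist a b + ρ) ^ (-α)) * ENNReal.ofReal (c₁ * ρ ^ Q) :=
        ENNReal.ofReal_mul (Real.rpow_nonneg (by positivity) _)
    _ ≤ ENNReal.ofReal ((dist a b + ρ) ^ (-α)) * m (Metric.ball a ρ) :=
        mul_le_mul_right (hlow a ρ hρ0 hρD) _
    _ = ∫⁻ _ in Metric.ball a ρ, ENNReal.ofReal ((dist a b + ρ) ^ (-α)) ∂m :=
        (setLIntegral_const _ _).symm
    _ ≤ ∫⁻ z in Metric.ball a ρ, ker α b z ∂m :=
        setLIntegral_mono_ae (measurable_ker α b).aemeasurable hae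

lemma J_compare (α c₁ c' : ℝ) (hQ : 0 < Q) (hα0 : 0 < α) (hαQ : α < Q)
    (hc₁ : 0 < c₁) (hc' : 0 < c')
    (hD : 0 < Metric.diam (Set.univ : Set X))
    (hlow : ∀ (x : X) (r : ℝ), 0 < r → r < Metric.diam (Set.univ : Set X) →
      ENNReal.ofReal (c₁ * r ^ Q) ≤ m (Metric.ball x r))
    (hball : ∀ (b : X) (ρ : ℝ), 0 < ρ →
      m (Metric.ball b ρ) ≤ ENNReal.ofReal (c' * min ρ (Metric.diam (Set.univ : Set X)) ^ Q))
    (hsing : ∀ b : X, m {b} = 0)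
    (a b : X) (r : ℝ) (hr : 0 < r) :
    ∫⁻ z in Metric.ball b r, ker α a z ∂m
      ≤ ENNReal.ofReal (max (3 ^ α * 2 ^ Q * c' / c₁)
          (c' * 2 ^ α / (1 - 2 ^ (-(Q - α))) * 4 ^ (Q - α) * 3 ^ α / c₁))
        * ∫⁻ z in Metric.ball a r, ker α b z ∂m := by
  set D := Metric.diam (Set.univ : Set X) with hDdef
  set Cw := c' * 2 ^ α / (1 - 2 ^ (-(Q - α))) with hCwdef
  set Cc := max (3 ^ α * 2 ^ Q * c' / c₁) (Cw * 4 ^ (Q - α) * 3 ^ α / c₁) with hCcdef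
  have hq1 : (2:ℝ) ^ (-(Q-α)) < 1 :=
    Real.rpow_lt_one_of_one_lt_of_neg one_lt_two (by linarith)
  have hq0 : (0:ℝ) < 2 ^ (-(Q-α)) := Real.rpow_pos_of_pos two_pos _
  have hCw0 : 0 < Cw := by
    apply div_pos (mul_pos hc' (Real.rpow_pos_of_pos two_pos _)); linarith
  have hCc0 : 0 < Cc := lt_max_of_lt_left (by positivity)
  set d := dist a b with hddef
  have hd0 : 0 ≤ d := dist_nonneg
  have hdD : d ≤ D := Metric.dist_le_diam_of_mem isCompact_univ.isBounded
    (Set.mem_univ a) (Set.mem_univ b)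
  set ρ := min r (D/2) with hρdef
  have hρ0 : 0 < ρ := lt_min hr (by linarith)
  have hρr : ρ ≤ r := min_le_left _ _
  set A := (d + ρ) ^ (-α) with hAdef
  set B := ρ ^ Q with hBdef
  have hA0 : 0 < A := Real.rpow_pos_of_pos (by linarith) _
  have hB0 : 0 < B := Real.rpow_pos_of_pos hρ0 _
  have hJlow := J_lower m Q α c₁ hQ hα0 hD hlow hsing a b r hr
  -- it suffices to bound the LHS by `Cc * (A * (c₁ * B))`
  suffices h : ∫⁻ z in Metric.ball b r, ker α a z ∂m
      ≤ ENNReal.ofReal (Cc * (A * (c₁ * B))) by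
    refine h.trans ?_
    rw [ENNReal.ofReal_mul hCc0.le]
    exact mul_le_mul_right hJlow _
  rcases le_or_gt r (d/2) with hcase | hcase
  · -- far case : r ≤ d/2
    have hd2 : 0 < d/2 := by linarith
    have hup1 : ∫⁻ z in Metric.ball b r, ker α a z ∂m
        ≤ ENNReal.ofReal ((d/2) ^ (-α)) * m (Metric.ball b r) := by
      rw [← setLIntegral_const]
      refine setLIntegral_mono' measurableSet_ball fun z hz => ?_
      apply ENNReal.ofReal_le_ofReal
      have hzb : dist z b < r := Metric.mem_ball.mp hz
      have hge : d/2 ≤ dist a z := by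
        have := dist_triangle a z b
        rw [← hddef] at this
        linarith
      exact Real.rpow_le_rpow_of_nonpos hd2 hge (neg_nonpos.mpr hα0.le)
    have hup2 : m (Metric.ball b r) ≤ ENNReal.ofReal (c' * (2*ρ) ^ Q) := by
      refine (hball b r hr).trans (ENNReal.ofReal_le_ofReal ?_)
      apply mul_le_mul_of_nonneg_left _ hc'.le
      apply Real.rpow_le_rpow (le_min hr.le hD.le) _ hQ.le
      rcases le_total r (D/2) with h | h
      · calc min r D ≤ r := min_le_left _ _
          _ ≤ 2 * ρ := by rw [hρdef, min_eq_left h]; linarith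
      · calc min r D ≤ D := min_le_right _ _
          _ = 2 * (D/2) := by ring
          _ ≤ 2 * ρ := by rw [hρdef, min_eq_right h]
    have h3 : (d/2) ^ (-α) ≤ 3 ^ α * A := by
      have hd3 : (d + ρ)/3 ≤ d/2 := by
        have : ρ ≤ d/2 := le_trans hρr hcase
        linarith
      have h4 : (d/2 : ℝ) ^ (-α) ≤ ((d + ρ)/3) ^ (-α) :=
        Real.rpow_le_rpow_of_nonpos (by linarith) hd3 (neg_nonpos.mpr hα0.le)
      refine h4.trans (le_of_eq ?_)
      rw [Real.div_rpow (by linarith) (by norm_num : (0:ℝ) ≤ 3),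
        Real.rpow_neg (by norm_num : (0:ℝ) ≤ 3) α, div_eq_mul_inv, inv_inv, mul_comm]
    calc ∫⁻ z in Metric.ball b r, ker α a z ∂m
        ≤ ENNReal.ofReal ((d/2) ^ (-α)) * ENNReal.ofReal (c' * (2*ρ) ^ Q) :=
          hup1.trans (mul_le_mul_right hup2 _)
      _ = ENNReal.ofReal ((d/2) ^ (-α) * (c' * (2*ρ) ^ Q)) :=
          (ENNReal.ofReal_mul (Real.rpow_nonneg hd2.le _)).symm
      _ ≤ ENNReal.ofReal (Cc * (A * (c₁ * B))) := by
          apply ENNReal.ofReal_le_ofReal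
          have he2 : (2*ρ:ℝ) ^ Q = 2 ^ Q * B := Real.mul_rpow (by norm_num) hρ0.le
          have hK : 3 ^ α * 2 ^ Q * c' / c₁ * (A * (c₁ * B))
              = (3 ^ α * A) * (c' * (2 ^ Q * B)) := by
            field_simp
          calc (d/2) ^ (-α) * (c' * (2*ρ) ^ Q)
              ≤ (3 ^ α * A) * (c' * (2*ρ) ^ Q) := by
                apply mul_le_mul_of_nonneg_right h3 (by positivity)
            _ = (3 ^ α * A) * (c' * (2 ^ Q * B)) := by rw [he2]
            _ = 3 ^ α * 2 ^ Q * c' / c₁ * (A * (c₁ * B)) := hK.symm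
            _ ≤ Cc * (A * (c₁ * B)) := by
                apply mul_le_mul_of_nonneg_right (le_max_left _ _) (by positivity)
  · -- near case : d/2 < r
    have hsub : Metric.ball b r ⊆ Metric.ball a (3*r) := by
      intro z hz
      rw [Metric.mem_ball] at hz ⊢
      have := dist_triangle z b a
      have hba : dist b a = d := by rw [dist_comm]
      linarith
    have hup := (lintegral_mono_set hsub).trans
      (W_bound m Q α c' hQ hα0 hαQ hc' hD hball a (3*r) (by linarith))
    refine hup.trans (ENNReal.ofReal_le_ofReal ?_)
    have hmin4 : min (3*r) (2*D) ≤ 4*ρ := by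
      rcases le_total r (D/2) with h | h
      · calc min (3*r) (2*D) ≤ 3*r := min_le_left _ _
          _ ≤ 4*ρ := by rw [hρdef, min_eq_left h]; linarith
      · calc min (3*r) (2*D) ≤ 2*D := min_le_right _ _
          _ = 4*(D/2) := by ring
          _ ≤ 4*ρ := by rw [hρdef, min_eq_right h]
    have hd3ρ : d + ρ ≤ 3*ρ := by
      rcases le_total r (D/2) with h | h
      · have : ρ = r := min_eq_left h
        linarith
      · have : ρ = D/2 := min_eq_right h
        linarith
    have hAineq : ρ ^ (-α) ≤ 3 ^ α * A := by
      have h1 : (3*ρ:ℝ) ^ (-α) ≤ A :=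
        Real.rpow_le_rpow_of_nonpos (by linarith) hd3ρ (neg_nonpos.mpr hα0.le)
      have h2 : (3*ρ:ℝ) ^ (-α) = 3 ^ (-α) * ρ ^ (-α) :=
        Real.mul_rpow (by norm_num) hρ0.le
      have h3 : (3:ℝ) ^ α * (3:ℝ) ^ (-α) = 1 := by
        rw [← Real.rpow_add (by norm_num : (0:ℝ) < 3)]
        simp
      calc ρ ^ (-α) = 3 ^ α * (3 ^ (-α) * ρ ^ (-α)) := by
            rw [← mul_assoc, h3, one_mul]
        _ = 3 ^ α * (3*ρ) ^ (-α) := by rw [h2]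
        _ ≤ 3 ^ α * A := by
            apply mul_le_mul_of_nonneg_left h1 (Real.rpow_nonneg (by norm_num) _)
    have hsplit : (4*ρ:ℝ) ^ (Q-α) = 4 ^ (Q-α) * (ρ ^ (-α) * B) := by
      rw [Real.mul_rpow (by norm_num) hρ0.le]
      congr 1
      rw [← Real.rpow_add hρ0]
      congr 1
      ring
    have hK : Cw * 4 ^ (Q-α) * 3 ^ α / c₁ * (A * (c₁ * B))
        = Cw * 4 ^ (Q-α) * ((3 ^ α * A) * B) := by
      field_simp
    calc Cw * min (3*r) (2*D) ^ (Q-α)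
        ≤ Cw * (4*ρ) ^ (Q-α) := by
          apply mul_le_mul_of_nonneg_left _ hCw0.le
          exact Real.rpow_le_rpow (le_min (by linarith) (by linarith)) hmin4 (by linarith)
      _ = Cw * 4 ^ (Q-α) * (ρ ^ (-α) * B) := by rw [hsplit]; ring
      _ ≤ Cw * 4 ^ (Q-α) * ((3 ^ α * A) * B) := by
          apply mul_le_mul_of_nonneg_left _ (by positivity)
          exact mul_le_mul_of_nonneg_right hAineq hB0.le
      _ = Cw * 4 ^ (Q-α) * 3 ^ α / c₁ * (A * (c₁ * B)) := hK.symm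
      _ ≤ Cc * (A * (c₁ * B)) := by
          apply mul_le_mul_of_nonneg_right (le_max_right _ _) (by positivity)


lemma I_eq (y α : ℝ) (a b : X) :
    ∫⁻ z, ker α a z * pker Q y b z ∂m
      = ENNReal.ofReal (y ^ (-Q)) *
          ∑' k : ℕ, eQ Q ^ k * ∫⁻ z in Metric.ball b (2 ^ k * y), ker α a z ∂m := by
  have hpt : ∀ z, ker α a z * pker Q y b z
      = ENNReal.ofReal (y ^ (-Q)) *
          ∑' k : ℕ, eQ Q ^ k * (Metric.ball b (2 ^ k * y)).indicator (fun w => ker α a w) z := by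
    intro z
    rw [pker, mul_comm, mul_assoc]
    congr 1
    rw [← ENNReal.tsum_mul_right]
    apply tsum_congr; intro k
    rw [mul_assoc]
    congr 1
    by_cases h : z ∈ Metric.ball b (2 ^ k * y)
    · rw [Set.indicator_of_mem h, Set.indicator_of_mem h, one_mul]
    · rw [Set.indicator_of_notMem h, Set.indicator_of_notMem h, zero_mul]
  simp_rw [hpt]
  rw [lintegral_const_mul' _ _ ENNReal.ofReal_ne_top]
  congr 1
  rw [lintegral_tsum (fun k =>
    (((measurable_ker α a).indicator measurableSet_ball).const_mul _).aemeasurable)]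
  apply tsum_congr; intro k
  rw [lintegral_const_mul' _ _ (ENNReal.pow_ne_top (eQ_ne_top Q)),
    lintegral_indicator measurableSet_ball]

lemma I_compare (α c₁ c' : ℝ) (hQ : 0 < Q) (hα0 : 0 < α) (hαQ : α < Q)
    (hc₁ : 0 < c₁) (hc' : 0 < c')
    (hD : 0 < Metric.diam (Set.univ : Set X))
    (hlow : ∀ (x : X) (r : ℝ), 0 < r → r < Metric.diam (Set.univ : Set X) →
      ENNReal.ofReal (c₁ * r ^ Q) ≤ m (Metric.ball x r))
    (hball : ∀ (b : X) (ρ : ℝ), 0 < ρ →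
      m (Metric.ball b ρ) ≤ ENNReal.ofReal (c' * min ρ (Metric.diam (Set.univ : Set X)) ^ Q))
    (hsing : ∀ b : X, m {b} = 0)
    (a b : X) {y : ℝ} (hy : 0 < y) :
    ∫⁻ z, ker α a z * pker Q y b z ∂m
      ≤ ENNReal.ofReal (max (3 ^ α * 2 ^ Q * c' / c₁)
          (c' * 2 ^ α / (1 - 2 ^ (-(Q - α))) * 4 ^ (Q - α) * 3 ^ α / c₁))
        * ∫⁻ z, ker α b z * pker Q y a z ∂m := by
  set Cc := max (3 ^ α * 2 ^ Q * c' / c₁)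
    (c' * 2 ^ α / (1 - 2 ^ (-(Q - α))) * 4 ^ (Q - α) * 3 ^ α / c₁) with hCcdef
  rw [I_eq m Q y α a b, I_eq m Q y α b a, ← mul_assoc,
    mul_comm (ENNReal.ofReal Cc) (ENNReal.ofReal (y ^ (-Q))), mul_assoc]
  apply mul_le_mul_right
  rw [← ENNReal.tsum_mul_left]
  apply ENNReal.tsum_le_tsum
  intro k
  have hrk : 0 < 2 ^ k * y := by positivity
  have hJ := J_compare m Q α c₁ c' hQ hα0 hαQ hc₁ hc' hD hlow hball hsing a b (2 ^ k * y) hrk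
  calc eQ Q ^ k * ∫⁻ z in Metric.ball b (2 ^ k * y), ker α a z ∂m
      ≤ eQ Q ^ k * (ENNReal.ofReal Cc * ∫⁻ z in Metric.ball a (2 ^ k * y), ker α b z ∂m) :=
        mul_le_mul_right hJ _
    _ = ENNReal.ofReal Cc * (eQ Q ^ k * ∫⁻ z in Metric.ball a (2 ^ k * y), ker α b z ∂m) := by
        ring

lemma geom_sum_half (c : ℝ) (hc : 0 ≤ c) :
    ∑' k : ℕ, ENNReal.ofReal (((1:ℝ)/2) ^ k * c) = ENNReal.ofReal (2 * c) := by
  have hterm : ∀ k : ℕ, ENNReal.ofReal (((1:ℝ)/2) ^ k * c)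
      = ENNReal.ofReal c * ENNReal.ofReal ((1:ℝ)/2) ^ k := by
    intro k
    rw [mul_comm, ENNReal.ofReal_mul hc, ENNReal.ofReal_pow (by norm_num)]
  rw [tsum_congr hterm, ENNReal.tsum_mul_left, ENNReal.tsum_geometric]
  have h1 : (1:ℝ≥0∞) - ENNReal.ofReal ((1:ℝ)/2) = ENNReal.ofReal ((1:ℝ)/2) := by
    rw [← ENNReal.ofReal_one, ← ENNReal.ofReal_sub _ (by norm_num)]
    norm_num
  rw [h1, ← ENNReal.ofReal_inv_of_pos (by norm_num), ← ENNReal.ofReal_mul hc]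
  congr 1
  norm_num
  ring

lemma Anorm_lower (α c₁ : ℝ) (hQ : 0 < Q) {y : ℝ} (hy : 0 < y)
    (hD : 0 < Metric.diam (Set.univ : Set X))
    (hlow : ∀ (x : X) (r : ℝ), 0 < r → r < Metric.diam (Set.univ : Set X) →
      ENNReal.ofReal (c₁ * r ^ Q) ≤ m (Metric.ball x r)) (z : X) :
    ENNReal.ofReal (c₁ * min y (Metric.diam (Set.univ : Set X)/2) ^ Q * y ^ (-Q))
      ≤ Anorm m Q y z := by
  set D := Metric.diam (Set.univ : Set X) with hDdef
  have hρ0 : 0 < min y (D/2) := lt_min hy (by linarith)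
  have hρD : min y (D/2) < D := lt_of_le_of_lt (min_le_right _ _) (by linarith)
  rw [Anorm_eq]
  have hterm : eQ Q ^ 0 * m (Metric.ball z (2 ^ 0 * y))
      ≤ ∑' k : ℕ, eQ Q ^ k * m (Metric.ball z (2 ^ k * y)) := ENNReal.le_tsum 0
  simp only [pow_zero, one_mul] at hterm
  calc ENNReal.ofReal (c₁ * min y (D/2) ^ Q * y ^ (-Q))
      = ENNReal.ofReal (y ^ (-Q)) * ENNReal.ofReal (c₁ * min y (D/2) ^ Q) := by
        rw [← ENNReal.ofReal_mul (Real.rpow_nonneg hy.le _)]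
        congr 1
        ring
    _ ≤ ENNReal.ofReal (y ^ (-Q)) * m (Metric.ball z (min y (D/2))) :=
        mul_le_mul_right (hlow z _ hρ0 hρD) _
    _ ≤ ENNReal.ofReal (y ^ (-Q)) * m (Metric.ball z y) :=
        mul_le_mul_right (measure_mono (Metric.ball_subset_ball (min_le_left _ _))) _
    _ ≤ ENNReal.ofReal (y ^ (-Q)) * ∑' k : ℕ, eQ Q ^ k * m (Metric.ball z (2 ^ k * y)) :=
        mul_le_mul_right hterm _

lemma Anorm_upper (α c₁ c' : ℝ) (hQ : 0 < Q) {y : ℝ} (hy : 0 < y)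
    (hc₁ : 0 < c₁) (hc' : 0 < c')
    (hD : 0 < Metric.diam (Set.univ : Set X))
    (hball : ∀ (b : X) (ρ : ℝ), 0 < ρ →
      m (Metric.ball b ρ) ≤ ENNReal.ofReal (c' * min ρ (Metric.diam (Set.univ : Set X)) ^ Q))
    (z : X) :
    Anorm m Q y z ≤ ENNReal.ofReal ((2 ^ (Q+1) * c' / c₁)
      * (c₁ * min y (Metric.diam (Set.univ : Set X)/2) ^ Q * y ^ (-Q))) := by
  set D := Metric.diam (Set.univ : Set X) with hDdef
  have hTsimp : (2 ^ (Q+1) * c' / c₁) * (c₁ * min y (D/2) ^ Q * y ^ (-Q))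
      = 2 ^ (Q+1) * c' * min y (D/2) ^ Q * y ^ (-Q) := by
    field_simp
  rw [hTsimp]
  rcases le_total y (D/2) with hycase | hycase
  · -- small y : min = y, target = 2^{Q+1} c'
    have hmin : min y (D/2) = y := min_eq_left hycase
    have hyQ : y ^ Q * y ^ (-Q) = 1 := by
      rw [← Real.rpow_add hy]; simp
    have htgt : 2 ^ (Q+1) * c' * min y (D/2) ^ Q * y ^ (-Q) = 2 ^ (Q+1) * c' * (y ^ Q * y ^ (-Q)) := by
      rw [hmin]; ring
    rw [htgt, hyQ, mul_one]
    have hbd : Anorm m Q y z ≤ ENNReal.ofReal (y ^ (-Q)) * ENNReal.ofReal (2 * (c' * y ^ Q)) := by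
      rw [Anorm_eq]
      apply mul_le_mul_right
      rw [← geom_sum_half (c' * y ^ Q) (by positivity)]
      apply ENNReal.tsum_le_tsum
      intro k
      have hrk : (0:ℝ) < 2 ^ k * y := by positivity
      calc eQ Q ^ k * m (Metric.ball z (2 ^ k * y))
          ≤ eQ Q ^ k * ENNReal.ofReal (c' * (2 ^ k * y) ^ Q) := by
            apply mul_le_mul_right
            refine (hball z _ hrk).trans (ENNReal.ofReal_le_ofReal ?_)
            apply mul_le_mul_of_nonneg_left _ hc'.le
            exact Real.rpow_le_rpow (le_min hrk.le hD.le) (min_le_left _ _) hQ.le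
        _ = ENNReal.ofReal (((2:ℝ) ^ (-(Q+1))) ^ k * (c' * (2 ^ k * y) ^ Q)) := by
            rw [eQ, ← ENNReal.ofReal_pow (Real.rpow_nonneg (by norm_num) _),
              ← ENNReal.ofReal_mul (by positivity)]
        _ = ENNReal.ofReal (((1:ℝ)/2) ^ k * (c' * y ^ Q)) := by
            congr 1
            have e1 : ((2:ℝ) ^ k * y) ^ Q = ((2:ℝ) ^ Q) ^ k * y ^ Q := by
              rw [Real.mul_rpow (by positivity) hy.le]
              congr 1
              rw [← Real.rpow_natCast (2:ℝ) k, ← Real.rpow_mul (by norm_num),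
                ← Real.rpow_natCast ((2:ℝ) ^ Q) k, ← Real.rpow_mul (by norm_num)]
              ring_nf
            have e2 : ((2:ℝ) ^ (-(Q+1))) * (2:ℝ) ^ Q = 1/2 := by
              rw [← Real.rpow_add two_pos]
              rw [show (-(Q+1)+Q : ℝ) = -1 by ring]
              rw [Real.rpow_neg (by norm_num) 1, Real.rpow_one]
              norm_num
            calc ((2:ℝ) ^ (-(Q+1))) ^ k * (c' * ((2:ℝ) ^ k * y) ^ Q)
                = (((2:ℝ) ^ (-(Q+1))) * (2:ℝ) ^ Q) ^ k * (c' * y ^ Q) := by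
                  rw [e1, mul_pow]; ring
              _ = ((1:ℝ)/2) ^ k * (c' * y ^ Q) := by rw [e2]
    refine hbd.trans ?_
    rw [← ENNReal.ofReal_mul (Real.rpow_nonneg hy.le _)]
    apply ENNReal.ofReal_le_ofReal
    have hylhs : y ^ (-Q) * (2 * (c' * y ^ Q)) = 2 * c' := by
      have h5 : y ^ (-Q) * (2 * (c' * y ^ Q)) = 2 * c' * (y ^ Q * y ^ (-Q)) := by ring
      rw [h5, hyQ, mul_one]
    rw [hylhs]
    apply mul_le_mul_of_nonneg_right _ hc'.le
    calc (2:ℝ) = 2 ^ (1:ℝ) := (Real.rpow_one 2).symm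
      _ ≤ 2 ^ (Q+1) := Real.rpow_le_rpow_of_exponent_le one_le_two (by linarith)
  · -- large y : min = D/2
    have hmin : min y (D/2) = D/2 := min_eq_right hycase
    have htgt : 2 ^ (Q+1) * c' * min y (D/2) ^ Q * y ^ (-Q)
        = 2 * (c' * D ^ Q) * y ^ (-Q) := by
      rw [hmin, Real.div_rpow (by linarith) (by norm_num : (0:ℝ) ≤ 2),
        Real.rpow_add two_pos, Real.rpow_one]
      field_simp
    rw [htgt]
    rw [Anorm_eq]
    have hbd : ∑' k : ℕ, eQ Q ^ k * m (Metric.ball z (2 ^ k * y))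
        ≤ ENNReal.ofReal (2 * (c' * D ^ Q)) := by
      rw [← geom_sum_half (c' * D ^ Q) (by positivity)]
      apply ENNReal.tsum_le_tsum
      intro k
      have hrk : (0:ℝ) < 2 ^ k * y := by positivity
      have hm : m (Metric.ball z (2 ^ k * y)) ≤ ENNReal.ofReal (c' * D ^ Q) := by
        refine (hball z _ hrk).trans (ENNReal.ofReal_le_ofReal ?_)
        apply mul_le_mul_of_nonneg_left _ hc'.le
        exact Real.rpow_le_rpow (le_min hrk.le hD.le) (min_le_right _ _) hQ.le
      have he : eQ Q ^ k ≤ ENNReal.ofReal (((1:ℝ)/2) ^ k) := by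
        rw [ENNReal.ofReal_pow (by norm_num)]
        apply pow_le_pow_left' (ENNReal.ofReal_le_ofReal ?_)
        calc (2:ℝ) ^ (-(Q+1)) ≤ (2:ℝ) ^ (-1 : ℝ) :=
              Real.rpow_le_rpow_of_exponent_le one_le_two (by linarith)
          _ = 1/2 := by
              rw [Real.rpow_neg (by norm_num) 1, Real.rpow_one]
              norm_num
      calc eQ Q ^ k * m (Metric.ball z (2 ^ k * y))
          ≤ ENNReal.ofReal (((1:ℝ)/2) ^ k) * ENNReal.ofReal (c' * D ^ Q) :=
            mul_le_mul he hm zero_le zero_le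
        _ = ENNReal.ofReal (((1:ℝ)/2) ^ k * (c' * D ^ Q)) :=
            (ENNReal.ofReal_mul (by positivity)).symm
    calc ENNReal.ofReal (y ^ (-Q)) * ∑' k : ℕ, eQ Q ^ k * m (Metric.ball z (2 ^ k * y))
        ≤ ENNReal.ofReal (y ^ (-Q)) * ENNReal.ofReal (2 * (c' * D ^ Q)) :=
          mul_le_mul_right hbd _
      _ = ENNReal.ofReal (2 * (c' * D ^ Q) * y ^ (-Q)) := by
          rw [← ENNReal.ofReal_mul (Real.rpow_nonneg hy.le _)]
          congr 1
          ring


lemma poisson_toReal {Q y : ℝ} (hQ : 0 < Q) (hy : 0 < y) (z : X) :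
    (fun w : X => dyadicPoissonKernel Q z y w) = fun w => (pker Q y z w).toReal := by
  funext w
  rw [← ofReal_poisson hQ hy, ENNReal.toReal_ofReal (poissonKernel_nonneg hy z w)]

end MeasureFacts

end RPPI

namespace RPPI
open Metric Set Filter

lemma main_case {X : Type*} [MetricSpace X] [CompactSpace X] [MeasurableSpace X] [BorelSpace X]
    [Nonempty X]
    (m : Measure X) (Q s p : ℝ) (hQ : 0 < Q) (hs0 : 0 < s) (hs2 : s < 1) (hp : 1 < p)
    (c₁ c₂ : ℝ) (hc₁ : 0 < c₁) (hc₁₂ : c₁ ≤ c₂)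
    (hA : ∀ (x : X) (r : ℝ), 0 < r → r < Metric.diam (Set.univ : Set X) →
      ENNReal.ofReal (c₁ * r ^ Q) ≤ m (Metric.ball x r) ∧
        m (Metric.ball x r) ≤ ENNReal.ofReal (c₂ * r ^ Q))
    (hD : 0 < Metric.diam (Set.univ : Set X)) :
    ∃ κ₁ κ₂ : ℝ, 0 < κ₁ ∧ κ₁ ≤ κ₂ ∧
      ∀ f : X → ℝ, MemLp f (ENNReal.ofReal p) m → (∀ z, 0 ≤ f z) →
        ∀ (x : X) (y : ℝ), 0 < y →
          κ₁ * PI m Q (potential m (rieszKernel Q s) f) x y ≤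
              potential m (rieszKernel Q s) (fun z => PI m Q f z y) x ∧
            potential m (rieszKernel Q s) (fun z => PI m Q f z y) x ≤
              κ₂ * PI m Q (potential m (rieszKernel Q s) f) x y := by
  classical
  set D := Metric.diam (Set.univ : Set X) with hDdef
  set α := Q * s with hαdef
  have hα0 : 0 < α := mul_pos hQ hs0
  have hαQ : α < Q := by
    rw [hαdef]
    nlinarith
  have hc₂ : 0 < c₂ := lt_of_lt_of_le hc₁ hc₁₂
  have hlow : ∀ (x : X) (r : ℝ), 0 < r → r < D → ENNReal.ofReal (c₁ * r ^ Q) ≤ m (Metric.ball x r) :=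
    fun x r h1 h2 => (hA x r h1 h2).1
  have hup : ∀ (x : X) (r : ℝ), 0 < r → r < D → m (Metric.ball x r) ≤ ENNReal.ofReal (c₂ * r ^ Q) :=
    fun x r h1 h2 => (hA x r h1 h2).2
  have hfin : m Set.univ < ⊤ := measure_univ_lt_top' m Q c₂ hD hup
  haveI : IsFiniteMeasure m := ⟨hfin⟩
  set M₀ := (m Set.univ).toReal with hM₀def
  set c' := max c₂ (M₀ / (D ^ Q)) with hc'def
  have hc'0 : 0 < c' := lt_max_of_lt_left hc₂
  have hDQ : (0:ℝ) < D ^ Q := Real.rpow_pos_of_pos hD Q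
  have hball : ∀ (b : X) (ρ : ℝ), 0 < ρ →
      m (Metric.ball b ρ) ≤ ENNReal.ofReal (c' * min ρ D ^ Q) := by
    intro b ρ hρ
    rcases lt_or_ge ρ D with h | h
    · refine (hup b ρ hρ h).trans (ENNReal.ofReal_le_ofReal ?_)
      rw [min_eq_left h.le]
      exact mul_le_mul_of_nonneg_right (le_max_left _ _) (Real.rpow_nonneg hρ.le _)
    · rw [min_eq_right h]
      refine (measure_mono (Set.subset_univ _)).trans ?_
      rw [← ENNReal.ofReal_toReal hfin.ne, ← hM₀def]
      apply ENNReal.ofReal_le_ofReal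
      calc M₀ = (M₀ / D ^ Q) * D ^ Q := by field_simp
        _ ≤ c' * D ^ Q := mul_le_mul_of_nonneg_right (le_max_right _ _) hDQ.le
  have hsing : ∀ b : X, m {b} = 0 := measure_singleton_zero m Q c₂ hQ hc₂ hD hup
  set Cw := c' * 2 ^ α / (1 - 2 ^ (-(Q - α))) with hCwdef
  set Cc := max (3 ^ α * 2 ^ Q * c' / c₁) (Cw * 4 ^ (Q - α) * 3 ^ α / c₁) with hCcdef
  have hq1 : (2:ℝ) ^ (-(Q-α)) < 1 :=
    Real.rpow_lt_one_of_one_lt_of_neg one_lt_two (by linarith)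
  have hCw0 : 0 < Cw := by
    apply div_pos (mul_pos hc'0 (Real.rpow_pos_of_pos two_pos _)); linarith
  have hCc0 : 0 < Cc := lt_max_of_lt_left (by positivity)
  set Λ := 2 ^ (Q+1) * c' / c₁ with hΛdef
  have hΛ0 : 0 < Λ := by positivity
  set CC := max (Cc * Λ) 1 with hCCdef
  have hCC1 : (1:ℝ) ≤ CC := le_max_right _ _
  have hCC0 : 0 < CC := lt_of_lt_of_le one_pos hCC1
  refine ⟨CC⁻¹, CC, inv_pos.mpr hCC0, ?_, ?_⟩
  · have h1 : CC⁻¹ ≤ 1 := by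
      rw [inv_le_one₀ hCC0]
      exact hCC1
    linarith
  intro f hf hfpos x y hy
  -- replace f by an everywhere-defined measurable nonnegative version g
  obtain ⟨g, hgmeas, hgf, hgnn⟩ : ∃ g : X → ℝ, Measurable g ∧ f =ᵐ[m] g ∧ ∀ z, 0 ≤ g z := by
    refine ⟨fun z => max (hf.1.mk f z) 0,
      hf.1.stronglyMeasurable_mk.measurable.max measurable_const, ?_, fun z => le_max_right _ _⟩
    filter_upwards [hf.1.ae_eq_mk] with z hz
    rw [← hz, max_eq_left (hfpos z)]
  have hpot_eq : potential m (rieszKernel Q s) f = potential m (rieszKernel Q s) g := by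
    funext w
    exact integral_congr_ae (hgf.mono fun z hz => by simp only []; rw [hz])
  have hPI_eq : (fun z => PI m Q f z y) = (fun z => PI m Q g z y) := by
    funext w
    unfold PI
    congr 1
    exact integral_congr_ae (hgf.mono fun z hz => by simp only []; rw [hz])
  rw [hpot_eq, hPI_eq]
  -- integrability of g
  have hfint : Integrable f m :=
    (hf.mono_exponent (ENNReal.one_le_ofReal.mpr hp.le)).integrable le_rfl
  have hgint : Integrable g m := hfint.congr hgf
  have hFfin : ∫⁻ z, ENNReal.ofReal (g z) ∂m < ⊤ := hgint.lintegral_lt_top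
  -- ENNReal setup
  set F : X → ℝ≥0∞ := fun z => ENNReal.ofReal (g z) with hFdef
  have hFmeas : Measurable F := hgmeas.ennreal_ofReal
  set lr := c₁ * min y (D/2) ^ Q * y ^ (-Q) with hlrdef
  have hlrpos : 0 < lr := by
    have h1 : 0 < min y (D/2) := lt_min hy (by linarith)
    positivity
  set le' := ENNReal.ofReal lr with hle'def
  have hl0 : le' ≠ 0 := (ENNReal.ofReal_pos.mpr hlrpos).ne'
  have hltop : le' ≠ ⊤ := ENNReal.ofReal_ne_top
  set mue := ENNReal.ofReal (Λ * lr) with hmuedef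
  have hmu0 : mue ≠ 0 := (ENNReal.ofReal_pos.mpr (by positivity)).ne'
  have hmutop : mue ≠ ⊤ := ENNReal.ofReal_ne_top
  have hAl : ∀ z, le' ≤ Anorm m Q y z := fun z => Anorm_lower m Q α c₁ hQ hy hD hlow z
  have hAu : ∀ z, Anorm m Q y z ≤ mue := fun z => Anorm_upper m Q α c₁ c' hQ hy hc₁ hc'0 hD hball z
  have hA0 : ∀ z, Anorm m Q y z ≠ 0 := fun z h => hl0 (le_zero_iff.mp (h ▸ hAl z))
  have hAtop : ∀ z, Anorm m Q y z ≠ ⊤ := fun z => ne_top_of_le_ne_top hmutop (hAu z)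
  set G : X → ℝ≥0∞ := fun z => ∫⁻ w, pker Q y z w * F w ∂m with hGdef
  have hGmeas : Measurable G :=
    Measurable.lintegral_prod_right' ((measurable_pker2 Q y).mul (hFmeas.comp measurable_snd))
  set Cpe := ENNReal.ofReal (y ^ (-Q)) * (1 - eQ Q)⁻¹ with hCpedef
  have hCpe_top : Cpe ≠ ⊤ := by
    apply ENNReal.mul_ne_top ENNReal.ofReal_ne_top
    rw [ENNReal.inv_ne_top]
    exact (tsub_pos_iff_lt.mpr (eQ_lt_one hQ)).ne'
  have hGfin : ∀ z, G z < ⊤ := by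
    intro z
    calc G z ≤ ∫⁻ w, Cpe * F w ∂m :=
          lintegral_mono fun w => mul_le_mul_left (pker_le hQ y z w) _
      _ = Cpe * ∫⁻ w, F w ∂m := lintegral_const_mul' _ _ hCpe_top
      _ < ⊤ := ENNReal.mul_lt_top hCpe_top.lt_top hFfin
  set T : X → ℝ≥0∞ := fun w => ∫⁻ v, ker α w v * F v ∂m with hTdef
  have hTmeas : Measurable T :=
    Measurable.lintegral_prod_right' ((measurable_ker2 α).mul (hFmeas.comp measurable_snd))
  set KT := ENNReal.ofReal (Cw * (2*D) ^ (Q-α)) with hKTdef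
  have hker_tot : ∀ a : X, ∫⁻ v, ker α a v ∂m ≤ KT :=
    fun a => ker_total m Q α c' hQ hα0 hαQ hc'0 hD hball a
  have hTint : ∫⁻ w, T w ∂m ≤ KT * ∫⁻ v, F v ∂m := by
    simp only [hTdef]
    rw [lintegral_lintegral_swap (((measurable_ker2 α).mul (hFmeas.comp measurable_snd)).aemeasurable)]
    calc ∫⁻ v, ∫⁻ w, ker α w v * F v ∂m ∂m
        = ∫⁻ v, (∫⁻ w, ker α w v ∂m) * F v ∂m := by
          apply lintegral_congr; intro v
          exact lintegral_mul_const' _ _ ENNReal.ofReal_ne_top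
      _ ≤ ∫⁻ v, KT * F v ∂m := by
          apply lintegral_mono; intro v
          apply mul_le_mul_left
          calc ∫⁻ w, ker α w v ∂m = ∫⁻ w, ker α v w ∂m := by
                apply lintegral_congr; intro w; rw [ker_symm]
            _ ≤ KT := hker_tot v
      _ = KT * ∫⁻ v, F v ∂m := lintegral_const_mul' _ _ ENNReal.ofReal_ne_top
  have hTae : ∀ᵐ w ∂m, T w < ⊤ := by
    apply ae_lt_top hTmeas
    exact (hTint.trans_lt (ENNReal.mul_lt_top ENNReal.ofReal_lt_top hFfin)).ne
  -- Bochner → lintegral conversions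
  have hPIeq : ∀ (h : X → ℝ), Measurable h → (∀ z, 0 ≤ h z) → ∀ z : X,
      PI m Q h z y
        = ((Anorm m Q y z)⁻¹ * ∫⁻ w, pker Q y z w * ENNReal.ofReal (h w) ∂m).toReal := by
    intro h hm hpos z
    have hpm : Measurable (fun w => dyadicPoissonKernel Q z y w) := by
      rw [poisson_toReal hQ hy z]
      exact (measurable_pker Q y z).ennreal_toReal
    unfold PI
    have e1 : ∫ w, dyadicPoissonKernel Q z y w ∂m = (Anorm m Q y z).toReal := by
      rw [integral_eq_lintegral_of_nonneg_ae
        (Eventually.of_forall (poissonKernel_nonneg hy z)) hpm.aestronglyMeasurable]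
      congr 1
      apply lintegral_congr; intro w
      rw [ofReal_poisson hQ hy]
    have e2 : ∫ w, dyadicPoissonKernel Q z y w * h w ∂m
        = (∫⁻ w, pker Q y z w * ENNReal.ofReal (h w) ∂m).toReal := by
      rw [integral_eq_lintegral_of_nonneg_ae
        (Eventually.of_forall fun w => mul_nonneg (poissonKernel_nonneg hy z w) (hpos w))
        (hpm.mul hm).aestronglyMeasurable]
      congr 1
      apply lintegral_congr; intro w
      rw [ENNReal.ofReal_mul (poissonKernel_nonneg hy z w), ofReal_poisson hQ hy]
    rw [e1, e2, ENNReal.toReal_mul, ENNReal.toReal_inv]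
  have hpot2 : ∀ (h : X → ℝ), Measurable h → (∀ z, 0 ≤ h z) → ∀ w : X,
      potential m (rieszKernel Q s) h w
        = (∫⁻ v, ker α w v * ENNReal.ofReal (h v) ∂m).toReal := by
    intro h hm hpos w
    unfold potential
    rw [integral_eq_lintegral_of_nonneg_ae
      (Eventually.of_forall fun v => mul_nonneg (riesz_nonneg Q s w v) (hpos v))
      (((measurable_riesz Q s w).mul hm).aestronglyMeasurable)]
    congr 1
    apply lintegral_congr; intro v
    rw [ENNReal.ofReal_mul (riesz_nonneg Q s w v), ofReal_riesz, ← hαdef]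
  -- identify LHS
  have hPImeasg : Measurable fun z => PI m Q g z y := by
    have hfun : (fun z => PI m Q g z y)
        = fun z => ((Anorm m Q y z)⁻¹ * G z).toReal := funext fun z => hPIeq g hgmeas hgnn z
    rw [hfun]
    exact ((measurable_Anorm m Q y).inv.mul hGmeas).ennreal_toReal
  have hPInng : ∀ z, 0 ≤ PI m Q g z y := by
    intro z; rw [hPIeq g hgmeas hgnn z]; exact ENNReal.toReal_nonneg
  set L := ∫⁻ z, ker α x z * ((Anorm m Q y z)⁻¹ * G z) ∂m with hLdef
  have hLHS : potential m (rieszKernel Q s) (fun z => PI m Q g z y) x = L.toReal := by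
    rw [hpot2 (fun z => PI m Q g z y) hPImeasg hPInng x]
    congr 1
    apply lintegral_congr; intro z
    congr 1
    rw [hPIeq g hgmeas hgnn z, ENNReal.ofReal_toReal]
    exact ENNReal.mul_ne_top (ENNReal.inv_ne_top.mpr (hA0 z)) (hGfin z).ne
  -- identify RHS
  set H := ∫⁻ w, pker Q y x w * T w ∂m with hHdef
  have hRHS : PI m Q (potential m (rieszKernel Q s) g) x y
      = ((Anorm m Q y x)⁻¹ * H).toReal := by
    have hpotg_meas : Measurable (potential m (rieszKernel Q s) g) := by
      have hfun : potential m (rieszKernel Q s) g = fun w => (T w).toReal :=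
        funext (hpot2 g hgmeas hgnn)
      rw [hfun]; exact hTmeas.ennreal_toReal
    have hpotg_nn : ∀ w, 0 ≤ potential m (rieszKernel Q s) g w := by
      intro w; rw [hpot2 g hgmeas hgnn w]; exact ENNReal.toReal_nonneg
    rw [hPIeq _ hpotg_meas hpotg_nn x]
    congr 2
    apply lintegral_congr_ae
    filter_upwards [hTae] with w hw
    rw [hpot2 g hgmeas hgnn w, ENNReal.ofReal_toReal hw.ne]
  -- Fubini identities
  set L' := ∫⁻ z, ker α x z * G z ∂m with hL'def
  have hswapL : L' = ∫⁻ w, F w * (∫⁻ z, ker α x z * pker Q y w z ∂m) ∂m := by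
    rw [hL'def]
    have e1 : ∀ z, ker α x z * G z = ∫⁻ w, ker α x z * (pker Q y z w * F w) ∂m := by
      intro z
      rw [lintegral_const_mul' _ _ (ker_ne_top α x z)]
    calc ∫⁻ z, ker α x z * G z ∂m
        = ∫⁻ z, ∫⁻ w, ker α x z * (pker Q y z w * F w) ∂m ∂m := lintegral_congr e1
      _ = ∫⁻ w, ∫⁻ z, ker α x z * (pker Q y z w * F w) ∂m ∂m := by
          apply lintegral_lintegral_swap
          exact (((measurable_ker α x).comp measurable_fst).mul
            ((measurable_pker2 Q y).mul (hFmeas.comp measurable_snd))).aemeasurable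
      _ = ∫⁻ w, F w * (∫⁻ z, ker α x z * pker Q y w z ∂m) ∂m := by
          apply lintegral_congr; intro w
          calc ∫⁻ z, ker α x z * (pker Q y z w * F w) ∂m
              = ∫⁻ z, (ker α x z * pker Q y w z) * F w ∂m := by
                apply lintegral_congr; intro z
                rw [pker_symm Q y z w]; ring
            _ = (∫⁻ z, ker α x z * pker Q y w z ∂m) * F w :=
                lintegral_mul_const' _ _ ENNReal.ofReal_ne_top
            _ = F w * (∫⁻ z, ker α x z * pker Q y w z ∂m) := mul_comm _ _
  have hswapH : H = ∫⁻ v, F v * (∫⁻ w, ker α v w * pker Q y x w ∂m) ∂m := by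
    rw [hHdef]
    have e1 : ∀ w, pker Q y x w * T w = ∫⁻ v, pker Q y x w * (ker α w v * F v) ∂m := by
      intro w
      rw [lintegral_const_mul' _ _ (pker_lt_top hQ y x w).ne]
    calc ∫⁻ w, pker Q y x w * T w ∂m
        = ∫⁻ w, ∫⁻ v, pker Q y x w * (ker α w v * F v) ∂m ∂m := lintegral_congr e1
      _ = ∫⁻ v, ∫⁻ w, pker Q y x w * (ker α w v * F v) ∂m ∂m := by
          apply lintegral_lintegral_swap
          exact (((measurable_pker Q y x).comp measurable_fst).mul
            ((measurable_ker2 α).mul (hFmeas.comp measurable_snd))).aemeasurable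
      _ = ∫⁻ v, F v * (∫⁻ w, ker α v w * pker Q y x w ∂m) ∂m := by
          apply lintegral_congr; intro v
          calc ∫⁻ w, pker Q y x w * (ker α w v * F v) ∂m
              = ∫⁻ w, (ker α v w * pker Q y x w) * F v ∂m := by
                apply lintegral_congr; intro w
                rw [ker_symm α w v]; ring
            _ = (∫⁻ w, ker α v w * pker Q y x w ∂m) * F v :=
                lintegral_mul_const' _ _ ENNReal.ofReal_ne_top
            _ = F v * (∫⁻ w, ker α v w * pker Q y x w ∂m) := mul_comm _ _
  have hIcomp : ∀ a b : X, ∫⁻ z, ker α a z * pker Q y b z ∂m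
      ≤ ENNReal.ofReal Cc * ∫⁻ z, ker α b z * pker Q y a z ∂m :=
    fun a b => I_compare m Q α c₁ c' hQ hα0 hαQ hc₁ hc'0 hD hlow hball hsing a b hy
  have hL'H : L' ≤ ENNReal.ofReal Cc * H := by
    rw [hswapL, hswapH]
    calc ∫⁻ w, F w * (∫⁻ z, ker α x z * pker Q y w z ∂m) ∂m
        ≤ ∫⁻ w, F w * (ENNReal.ofReal Cc * ∫⁻ z, ker α w z * pker Q y x z ∂m) ∂m :=
          lintegral_mono fun w => mul_le_mul_right (hIcomp x w) _
      _ = ∫⁻ w, ENNReal.ofReal Cc * (F w * ∫⁻ z, ker α w z * pker Q y x z ∂m) ∂m := by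
          apply lintegral_congr; intro w; ring
      _ = ENNReal.ofReal Cc * ∫⁻ w, F w * (∫⁻ z, ker α w z * pker Q y x z ∂m) ∂m :=
          lintegral_const_mul' _ _ ENNReal.ofReal_ne_top
  have hHL' : H ≤ ENNReal.ofReal Cc * L' := by
    rw [hswapL, hswapH]
    calc ∫⁻ v, F v * (∫⁻ w, ker α v w * pker Q y x w ∂m) ∂m
        ≤ ∫⁻ v, F v * (ENNReal.ofReal Cc * ∫⁻ w, ker α x w * pker Q y v w ∂m) ∂m :=
          lintegral_mono fun v => mul_le_mul_right (hIcomp v x) _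
      _ = ∫⁻ v, ENNReal.ofReal Cc * (F v * ∫⁻ w, ker α x w * pker Q y v w ∂m) ∂m := by
          apply lintegral_congr; intro v; ring
      _ = ENNReal.ofReal Cc * ∫⁻ v, F v * (∫⁻ w, ker α x w * pker Q y v w ∂m) ∂m :=
          lintegral_const_mul' _ _ ENNReal.ofReal_ne_top
  -- normalisation comparisons
  have hL_up : L ≤ le'⁻¹ * L' := by
    rw [hLdef, hL'def]
    calc ∫⁻ z, ker α x z * ((Anorm m Q y z)⁻¹ * G z) ∂m
        ≤ ∫⁻ z, ker α x z * (le'⁻¹ * G z) ∂m := by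
          apply lintegral_mono; intro z
          exact mul_le_mul_right (mul_le_mul_left (ENNReal.inv_le_inv.mpr (hAl z)) _) _
      _ = ∫⁻ z, le'⁻¹ * (ker α x z * G z) ∂m := by apply lintegral_congr; intro z; ring
      _ = le'⁻¹ * ∫⁻ z, ker α x z * G z ∂m :=
          lintegral_const_mul' _ _ (ENNReal.inv_ne_top.mpr hl0)
  have hL_lo : mue⁻¹ * L' ≤ L := by
    rw [hLdef, hL'def, ← lintegral_const_mul' _ _ (ENNReal.inv_ne_top.mpr hmu0)]
    apply lintegral_mono; intro z
    calc mue⁻¹ * (ker α x z * G z) = ker α x z * (mue⁻¹ * G z) := by ring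
      _ ≤ ker α x z * ((Anorm m Q y z)⁻¹ * G z) :=
        mul_le_mul_right (mul_le_mul_left (ENNReal.inv_le_inv.mpr (hAu z)) _) _
  set Re := (Anorm m Q y x)⁻¹ * H with hRedef
  have hR_up : Re ≤ le'⁻¹ * H := mul_le_mul_left (ENNReal.inv_le_inv.mpr (hAl x)) _
  have hR_lo : mue⁻¹ * H ≤ Re := mul_le_mul_left (ENNReal.inv_le_inv.mpr (hAu x)) _
  -- finiteness
  have hIbd : ∀ v : X, ∫⁻ w, ker α v w * pker Q y x w ∂m ≤ Cpe * KT := by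
    intro v
    calc ∫⁻ w, ker α v w * pker Q y x w ∂m
        ≤ ∫⁻ w, ker α v w * Cpe ∂m :=
          lintegral_mono fun w => mul_le_mul_right (pker_le hQ y x w) _
      _ = (∫⁻ w, ker α v w ∂m) * Cpe := lintegral_mul_const' _ _ hCpe_top
      _ ≤ KT * Cpe := mul_le_mul_left (hker_tot v) _
      _ = Cpe * KT := mul_comm _ _
  have hHfin : H ≠ ⊤ := by
    rw [hswapH]
    have h1 : ∫⁻ v, F v * (∫⁻ w, ker α v w * pker Q y x w ∂m) ∂m
        ≤ ∫⁻ v, F v * (Cpe * KT) ∂m :=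
      lintegral_mono fun v => mul_le_mul_right (hIbd v) _
    refine (h1.trans_lt ?_).ne
    rw [lintegral_mul_const' _ _ (ENNReal.mul_ne_top hCpe_top ENNReal.ofReal_ne_top)]
    exact ENNReal.mul_lt_top hFfin
      (ENNReal.mul_lt_top hCpe_top.lt_top ENNReal.ofReal_lt_top)
  have hL'fin : L' ≠ ⊤ :=
    (hL'H.trans_lt (ENNReal.mul_lt_top ENNReal.ofReal_lt_top hHfin.lt_top)).ne
  have hLfin : L ≠ ⊤ :=
    (hL_up.trans_lt (ENNReal.mul_lt_top
      (ENNReal.inv_lt_top.mpr (ENNReal.ofReal_pos.mpr hlrpos)) hL'fin.lt_top)).ne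
  have hRefin : Re ≠ ⊤ :=
    (hR_up.trans_lt (ENNReal.mul_lt_top
      (ENNReal.inv_lt_top.mpr (ENNReal.ofReal_pos.mpr hlrpos)) hHfin.lt_top)).ne
  -- final enn comparisons
  have hlinvmu : le'⁻¹ * mue = ENNReal.ofReal Λ := by
    rw [hmuedef, ENNReal.ofReal_mul hΛ0.le, ← hle'def, mul_comm (ENNReal.ofReal Λ) le',
      ← mul_assoc, ENNReal.inv_mul_cancel hl0 hltop, one_mul]
  have hfinal_up : L ≤ ENNReal.ofReal CC * Re := by
    calc L ≤ le'⁻¹ * L' := hL_up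
      _ ≤ le'⁻¹ * (ENNReal.ofReal Cc * H) := mul_le_mul_right hL'H _
      _ ≤ le'⁻¹ * (ENNReal.ofReal Cc * (mue * Re)) := by
          apply mul_le_mul_right; apply mul_le_mul_right
          have h1 : mue * (mue⁻¹ * H) ≤ mue * Re := mul_le_mul_right hR_lo _
          rwa [← mul_assoc, ENNReal.mul_inv_cancel hmu0 hmutop, one_mul] at h1
      _ = (le'⁻¹ * mue) * (ENNReal.ofReal Cc * Re) := by ring
      _ = ENNReal.ofReal Λ * (ENNReal.ofReal Cc * Re) := by rw [hlinvmu]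
      _ = (ENNReal.ofReal Λ * ENNReal.ofReal Cc) * Re := by ring
      _ ≤ ENNReal.ofReal CC * Re := by
          apply mul_le_mul_left
          rw [← ENNReal.ofReal_mul hΛ0.le]
          apply ENNReal.ofReal_le_ofReal
          rw [mul_comm]
          exact le_max_left _ _
  have hfinal_lo : Re ≤ ENNReal.ofReal CC * L := by
    calc Re ≤ le'⁻¹ * H := hR_up
      _ ≤ le'⁻¹ * (ENNReal.ofReal Cc * L') := mul_le_mul_right hHL' _
      _ ≤ le'⁻¹ * (ENNReal.ofReal Cc * (mue * L)) := by
          apply mul_le_mul_right; apply mul_le_mul_right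
          have h1 : mue * (mue⁻¹ * L') ≤ mue * L := mul_le_mul_right hL_lo _
          rwa [← mul_assoc, ENNReal.mul_inv_cancel hmu0 hmutop, one_mul] at h1
      _ = (le'⁻¹ * mue) * (ENNReal.ofReal Cc * L) := by ring
      _ = ENNReal.ofReal Λ * (ENNReal.ofReal Cc * L) := by rw [hlinvmu]
      _ = (ENNReal.ofReal Λ * ENNReal.ofReal Cc) * L := by ring
      _ ≤ ENNReal.ofReal CC * L := by
          apply mul_le_mul_left
          rw [← ENNReal.ofReal_mul hΛ0.le]
          apply ENNReal.ofReal_le_ofReal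
          rw [mul_comm]
          exact le_max_left _ _
  -- conclude
  rw [hLHS, hRHS]
  constructor
  · have h3 : Re.toReal ≤ (ENNReal.ofReal CC * L).toReal :=
      ENNReal.toReal_mono (ENNReal.mul_ne_top ENNReal.ofReal_ne_top hLfin) hfinal_lo
    have h4 : (ENNReal.ofReal CC * L).toReal = CC * L.toReal := by
      rw [ENNReal.toReal_mul, ENNReal.toReal_ofReal hCC0.le]
    rw [h4] at h3
    calc CC⁻¹ * Re.toReal ≤ CC⁻¹ * (CC * L.toReal) :=
          mul_le_mul_of_nonneg_left h3 (by positivity)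
      _ = L.toReal := by field_simp
  · have h3 : L.toReal ≤ (ENNReal.ofReal CC * Re).toReal :=
      ENNReal.toReal_mono (ENNReal.mul_ne_top ENNReal.ofReal_ne_top hRefin) hfinal_up
    have h4 : (ENNReal.ofReal CC * Re).toReal = CC * Re.toReal := by
      rw [ENNReal.toReal_mul, ENNReal.toReal_ofReal hCC0.le]
    rw [h4] at h3
    exact h3


end RPPI


/-- **Exchanging the order of the dyadic Poisson integral and of the Riesz
potential.**  On a compact Ahlfors `Q`-regular space there are
`0 < c₁ ≤ c₂ < ∞`, depending only on `X`, `Q` and `s`, such that for every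
nonnegative `f ∈ L^p(X,m)`, every `x ∈ X` and every `y > 0`:
`c₁ · PI(K_{X,s}*f)(x,y) ≤ (K_{X,s} * PI(f)(·,y))(x) ≤ c₂ · PI(K_{X,s}*f)(x,y)`. -/
theorem riesz_potential_poisson_integral_commute
    {X : Type*} [MetricSpace X] [CompactSpace X] [MeasurableSpace X] [BorelSpace X]
    (m : Measure X) (Q : ℝ) (hQ : 0 < Q) (hAhl : IsAhlfors m Q)
    (p p' s : ℝ) (hp : 1 < p) (hp' : 1 / p + 1 / p' = 1)
    (hs1 : 1 / p' ≤ s) (hs2 : s < 1) :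
    ∃ c₁ c₂ : ℝ, 0 < c₁ ∧ c₁ ≤ c₂ ∧
      ∀ f : X → ℝ, MemLp f (ENNReal.ofReal p) m → (∀ z, 0 ≤ f z) →
        ∀ (x : X) (y : ℝ), 0 < y →
          c₁ * PI m Q (potential m (rieszKernel Q s) f) x y ≤
              potential m (rieszKernel Q s) (fun z => PI m Q f z y) x ∧
            potential m (rieszKernel Q s) (fun z => PI m Q f z y) x ≤
              c₂ * PI m Q (potential m (rieszKernel Q s) f) x y := by
  obtain ⟨c₁, c₂, hc₁, hc₁₂, hA⟩ := hAhl
  have hp0 : 0 < p := lt_trans one_pos hp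
  have hs0 : 0 < s := by
    have h1 : 1/p < 1 := by
      rw [div_lt_one hp0]; exact hp
    have h2 : 0 < 1/p' := by linarith
    linarith
  rcases isEmpty_or_nonempty X with hX | hX
  · exact ⟨1, 1, one_pos, le_rfl, fun f _ _ x => (IsEmpty.false x).elim⟩
  rcases lt_or_ge 0 (Metric.diam (Set.univ : Set X)) with hD | hD
  · exact RPPI.main_case m Q s p hQ hs0 hs2 hp c₁ c₂ hc₁ hc₁₂ hA hD
  · -- degenerate case : diameter zero
    have hD0 : Metric.diam (Set.univ : Set X) = 0 := le_antisymm hD Metric.diam_nonneg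
    have hdist : ∀ a b : X, dist a b = 0 := by
      intro a b
      have h1 := Metric.dist_le_diam_of_mem isCompact_univ.isBounded
        (Set.mem_univ a) (Set.mem_univ b)
      rw [hD0] at h1
      have h2 : (0:ℝ) ≤ dist a b := dist_nonneg
      linarith
    have hkzero : ∀ a b : X, rieszKernel Q s a b = 0 := by
      intro a b
      rw [rieszKernel, hdist]
      exact Real.zero_rpow (neg_ne_zero.mpr (mul_pos hQ hs0).ne')
    have hpot0 : ∀ (h : X → ℝ) (w : X), potential m (rieszKernel Q s) h w = 0 := by
      intro h w
      unfold potential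
      have he : (fun v => rieszKernel Q s w v * h v) = fun _ => (0:ℝ) := by
        funext v; rw [hkzero, zero_mul]
      rw [he, integral_zero]
    refine ⟨1, 1, one_pos, le_rfl, fun f hf hfp x y hy => ?_⟩
    have h1 : potential m (rieszKernel Q s) (fun z => PI m Q f z y) x = 0 := hpot0 _ x
    have h2 : PI m Q (potential m (rieszKernel Q s) f) x y = 0 := by
      unfold PI
      have he : (fun z => dyadicPoissonKernel Q x y z * potential m (rieszKernel Q s) f z)
          = fun _ => (0:ℝ) := by
        funext z; rw [hpot0, mul_zero]
      rw [he, integral_zero, mul_zero]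
    rw [h1, h2]
    norm_num


end
end

section
/- Let (X,d,m) be a compact Ahlfors Q-regular space, let p > 1 with 1/p + 1/p' = 1, and let 1/p' ≤ s < 1. Let f ∈ L^p(X,m) with f ≥ 0 and let ε > 0. Define E(f,ε) := { (x,y) ∈ X×(0,∞) : PI(K_{X,s}*f)(x,y) > ε } and E'(f,ε) := ∪_{(x,y)∈E(f,ε)} B_d(x,y)×{y} ⊆ X×(0,∞). Then there exists a constant c > 0, depending only on X and Q, such that PI(K_{X,s}*f)(x,y) ≥ c·ε for all (x,y) ∈ E'(f,ε). -/
noncomputable section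

open MeasureTheory ENNReal NNReal

section aux
variable {X : Type*} [MetricSpace X] (Q : ℝ) (hQ : 0 < Q)

lemma coef_eq (k : ℕ) : (2:ℝ) ^ (-((Q + 1) * (k : ℝ))) = ((2:ℝ) ^ (-(Q+1)))^k := by
  rw [← Real.rpow_natCast ((2:ℝ) ^ (-(Q+1))) k, ← Real.rpow_mul (by norm_num)]
  ring_nf

lemma coef_pos (k : ℕ) : 0 < (2:ℝ) ^ (-((Q + 1) * (k : ℝ))) :=
  Real.rpow_pos_of_pos (by norm_num) _

lemma term_nonneg (x : X) (y : ℝ) (z : X) (k : ℕ) :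
    0 ≤ (2 : ℝ) ^ (-((Q + 1) * (k : ℝ))) *
      (Metric.ball x (2 ^ k * y)).indicator (fun _ => (1 : ℝ)) z :=
  mul_nonneg (coef_pos Q k).le (Set.indicator_nonneg (fun _ _ => zero_le_one) z)

lemma pk_summable (hQ : 0 < Q) (x : X) (y : ℝ) (z : X) :
    Summable (fun k : ℕ => (2 : ℝ) ^ (-((Q + 1) * (k : ℝ))) *
      (Metric.ball x (2 ^ k * y)).indicator (fun _ => (1 : ℝ)) z) := by
  have hr : (0:ℝ) < (2:ℝ) ^ (-(Q+1)) := Real.rpow_pos_of_pos (by norm_num) _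
  have hgeo : Summable (fun k : ℕ => ((2:ℝ) ^ (-(Q+1)))^k) :=
    summable_geometric_of_lt_one hr.le
      (Real.rpow_lt_one_of_one_lt_of_neg one_lt_two (by linarith))
  refine hgeo.of_nonneg_of_le (term_nonneg Q x y z) (fun k => ?_)
  rw [coef_eq]
  have h1 : (Metric.ball x (2 ^ k * y)).indicator (fun _ => (1 : ℝ)) z ≤ 1 :=
    Set.indicator_le_self' (fun _ _ => zero_le_one) z
  have h2 : (0:ℝ) < ((2:ℝ) ^ (-(Q+1)))^k := pow_pos hr k
  nlinarith

lemma pk_nonneg (x : X) (y : ℝ) (hy : 0 < y) (z : X) : 0 ≤ dyadicPoissonKernel Q x y z :=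
  mul_nonneg (Real.rpow_pos_of_pos hy _).le (tsum_nonneg (term_nonneg Q x y z))

lemma pk_pos (hQ : 0 < Q) (x : X) (y : ℝ) (hy : 0 < y) (z : X) : 0 < dyadicPoissonKernel Q x y z := by
  obtain ⟨n, hn⟩ := pow_unbounded_of_one_lt (dist x z / y) (one_lt_two (α := ℝ))
  have hz : z ∈ Metric.ball x (2 ^ n * y) := by
    rw [Metric.mem_ball, dist_comm]
    calc dist x z = dist x z / y * y := by field_simp
      _ < 2 ^ n * y := by gcongr
  apply mul_pos (Real.rpow_pos_of_pos hy _)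
  have h1 : (0:ℝ) < (2 : ℝ) ^ (-((Q + 1) * (n : ℝ))) *
      (Metric.ball x (2 ^ n * y)).indicator (fun _ => (1 : ℝ)) z := by
    rw [Set.indicator_of_mem hz, mul_one]; exact coef_pos Q n
  exact lt_of_lt_of_le h1 (Summable.le_tsum (pk_summable Q hQ x y z) n (fun m _ => term_nonneg Q x y z m))

lemma pk_measurable [MeasurableSpace X] [BorelSpace X] (hQ : 0 < Q) (x : X) (y : ℝ) :
    Measurable (dyadicPoissonKernel Q x y) := by
  apply Measurable.const_mul
  apply measurable_of_tendsto_metrizable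
    (f := fun n z => ∑ k ∈ Finset.range n, (2 : ℝ) ^ (-((Q + 1) * (k : ℝ))) *
      (Metric.ball x (2 ^ k * y)).indicator (fun _ => (1 : ℝ)) z)
  · intro n
    apply Finset.measurable_sum
    intro k _
    exact ((measurable_const.indicator Metric.isOpen_ball.measurableSet).const_mul _)
  · rw [tendsto_pi_nhds]
    intro z
    exact (pk_summable Q hQ x y z).hasSum.tendsto_sum_nat

lemma pk_le (hQ : 0 < Q) (x x' : X) (y : ℝ) (hy : 0 < y) (hd : dist x x' < y) (z : X) :
    dyadicPoissonKernel Q x' y z ≤ (2:ℝ) ^ (Q+1) * dyadicPoissonKernel Q x y z := by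
  set a : ℕ → ℝ := fun k => (2 : ℝ) ^ (-((Q + 1) * (k : ℝ)))
  set b : ℕ → ℝ := fun k => a k * (Metric.ball x (2 ^ k * y)).indicator (fun _ => (1 : ℝ)) z
  have hA : (0:ℝ) < (2:ℝ) ^ (Q+1) := Real.rpow_pos_of_pos (by norm_num) _
  have hb : Summable b := pk_summable Q hQ x y z
  have hb1 : Summable (fun k => b (k+1)) := (_root_.summable_nat_add_iff 1).2 hb
  have hsub : ∀ k : ℕ, Metric.ball x' (2 ^ k * y) ⊆ Metric.ball x (2 ^ (k+1) * y) := by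
    intro k w hw
    rw [Metric.mem_ball] at hw ⊢
    have h1 : (1:ℝ) ≤ 2 ^ k := one_le_pow₀ one_le_two
    calc dist w x ≤ dist w x' + dist x' x := dist_triangle _ _ _
      _ < 2 ^ k * y + y := by rw [dist_comm x' x]; exact add_lt_add hw hd
      _ ≤ 2 ^ k * y + 2 ^ k * y := by nlinarith
      _ = 2 ^ (k+1) * y := by ring
  have key : ∀ k : ℕ, a k * (Metric.ball x' (2 ^ k * y)).indicator (fun _ => (1 : ℝ)) z
      ≤ (2:ℝ) ^ (Q+1) * b (k+1) := by
    intro k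
    have hcoef : a k = (2:ℝ) ^ (Q+1) * a (k+1) := by
      simp only [a, ← Real.rpow_add (by norm_num : (0:ℝ) < 2)]
      congr 1
      push_cast
      ring
    calc a k * (Metric.ball x' (2 ^ k * y)).indicator (fun _ => (1 : ℝ)) z
        ≤ a k * (Metric.ball x (2 ^ (k+1) * y)).indicator (fun _ => (1 : ℝ)) z := by
          apply mul_le_mul_of_nonneg_left _ (coef_pos Q k).le
          exact Set.indicator_le_indicator_of_subset (hsub k) (fun _ => zero_le_one) z
      _ = (2:ℝ) ^ (Q+1) * b (k+1) := by rw [hcoef]; simp only [b]; ring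
  have hsum' : Summable (fun k : ℕ => a k *
      (Metric.ball x' (2 ^ k * y)).indicator (fun _ => (1 : ℝ)) z) := pk_summable Q hQ x' y z
  have step1 : (∑' k : ℕ, a k * (Metric.ball x' (2 ^ k * y)).indicator (fun _ => (1 : ℝ)) z)
      ≤ (2:ℝ) ^ (Q+1) * ∑' k : ℕ, b (k+1) := by
    exact (Summable.tsum_le_tsum key hsum' (hb1.mul_left _)).trans_eq tsum_mul_left
  have step2 : (∑' k : ℕ, b (k+1)) ≤ ∑' k, b k := by
    rw [hb.tsum_eq_zero_add]
    have : 0 ≤ b 0 := term_nonneg Q x y z 0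
    linarith
  have hyQ : (0:ℝ) ≤ y ^ (-Q) := (Real.rpow_pos_of_pos hy _).le
  calc dyadicPoissonKernel Q x' y z
      ≤ y ^ (-Q) * ((2:ℝ) ^ (Q+1) * ∑' k, b k) := by
        apply mul_le_mul_of_nonneg_left _ hyQ
        exact step1.trans (mul_le_mul_of_nonneg_left step2 hA.le)
    _ = (2:ℝ) ^ (Q+1) * dyadicPoissonKernel Q x y z := by rw [dyadicPoissonKernel]; ring

end aux

/-- **Harnack-type inequality for the dyadic Poisson integral of a Riesz
potential.**  On a compact Ahlfors `Q`-regular space there is `c > 0`, depending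
only on `X` and `Q`, such that for every nonnegative `f ∈ L^p(X,m)` and `ε > 0`:
if `(x,y)` lies in `E'(f,ε) = ⋃_{(x',y)∈E(f,ε)} B(x',y) × {y}`, where
`E(f,ε) = {(x',y) : PI(K_{X,s}*f)(x',y) > ε}`, then
`PI(K_{X,s}*f)(x,y) ≥ c ε`. -/
theorem harnack_type_inequality_poisson
    {X : Type*} [MetricSpace X] [CompactSpace X] [MeasurableSpace X] [BorelSpace X]
    (m : Measure X) (Q : ℝ) (hQ : 0 < Q) (hAhl : IsAhlfors m Q)
    (p p' s : ℝ) (hp : 1 < p) (hp' : 1 / p + 1 / p' = 1)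
    (hs1 : 1 / p' ≤ s) (hs2 : s < 1) :
    ∃ c : ℝ, 0 < c ∧
      ∀ f : X → ℝ, MemLp f (ENNReal.ofReal p) m → (∀ z, 0 ≤ f z) →
        ∀ ε : ℝ, 0 < ε →
          ∀ (x : X) (y : ℝ), 0 < y →
            (∃ x' : X, ε < PI m Q (potential m (rieszKernel Q s) f) x' y ∧
              x ∈ Metric.ball x' y) →
            c * ε ≤ PI m Q (potential m (rieszKernel Q s) f) x y := by

  have hA : (0:ℝ) < (2:ℝ) ^ (Q+1) := Real.rpow_pos_of_pos (by norm_num) _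
  set A := (2:ℝ) ^ (Q+1) with hAdef
  refine ⟨A⁻¹ * A⁻¹, by positivity, ?_⟩
  intro f hf hf0 ε hε x y hy ⟨x', hPI, hx⟩
  set g := potential m (rieszKernel Q s) f with hgdef
  have hg0 : ∀ z, 0 ≤ g z := fun z =>
    integral_nonneg fun w => mul_nonneg (Real.rpow_nonneg dist_nonneg _) (hf0 w)
  have hd : dist x x' < y := Metric.mem_ball.1 hx
  have hle1 : ∀ z, dyadicPoissonKernel Q x y z ≤ A * dyadicPoissonKernel Q x' y z := fun z =>
    pk_le Q hQ x' x y hy (by rwa [dist_comm]) z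
  have hle2 : ∀ z, dyadicPoissonKernel Q x' y z ≤ A * dyadicPoissonKernel Q x y z := fun z =>
    pk_le Q hQ x x' y hy hd z
  rw [PI] at hPI ⊢
  set I' := ∫ z, dyadicPoissonKernel Q x' y z ∂m with hI'def
  set J' := ∫ z, dyadicPoissonKernel Q x' y z * g z ∂m with hJ'def
  set I := ∫ z, dyadicPoissonKernel Q x y z ∂m with hIdef
  set J := ∫ z, dyadicPoissonKernel Q x y z * g z ∂m with hJdef
  have hI'0 : 0 ≤ I' := integral_nonneg fun z => pk_nonneg Q x' y hy z
  have hJ'0 : 0 ≤ J' := integral_nonneg fun z => mul_nonneg (pk_nonneg Q x' y hy z) (hg0 z)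
  have hJ' : 0 < J' := by
    rcases hJ'0.lt_or_eq with h | h
    · exact h
    · exfalso; rw [← h, mul_zero] at hPI; linarith
  have hI'inv : 0 < I'⁻¹ := by nlinarith
  have hI' : 0 < I' := inv_pos.1 hI'inv
  have hIntP' : Integrable (fun z => dyadicPoissonKernel Q x' y z) m := by
    by_contra h
    rw [hI'def, integral_undef h] at hI'
    exact lt_irrefl 0 hI'
  have hIntP'g : Integrable (fun z => dyadicPoissonKernel Q x' y z * g z) m := by
    by_contra h
    rw [hJ'def, integral_undef h] at hJ'
    exact lt_irrefl 0 hJ'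
  have hgm : AEStronglyMeasurable g m := by
    have h1 : AEStronglyMeasurable
        (fun z => (dyadicPoissonKernel Q x' y z)⁻¹ * (dyadicPoissonKernel Q x' y z * g z)) m :=
      (pk_measurable Q hQ x' y).inv.aestronglyMeasurable.mul hIntP'g.aestronglyMeasurable
    have h2 : (fun z => (dyadicPoissonKernel Q x' y z)⁻¹ * (dyadicPoissonKernel Q x' y z * g z)) = g := by
      funext z
      rw [← mul_assoc, inv_mul_cancel₀ (pk_pos Q hQ x' y hy z).ne', one_mul]
    rwa [h2] at h1
  have hIntPx : Integrable (fun z => dyadicPoissonKernel Q x y z) m := by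
    refine (hIntP'.const_mul A).mono'
      (pk_measurable Q hQ x y).aestronglyMeasurable (ae_of_all _ fun z => ?_)
    rw [Real.norm_eq_abs, abs_of_nonneg (pk_nonneg Q x y hy z)]
    exact hle1 z
  have hIntPxg : Integrable (fun z => dyadicPoissonKernel Q x y z * g z) m := by
    refine (hIntP'g.const_mul A).mono'
      ((pk_measurable Q hQ x y).aestronglyMeasurable.mul hgm) (ae_of_all _ fun z => ?_)
    rw [Real.norm_eq_abs, abs_of_nonneg (mul_nonneg (pk_nonneg Q x y hy z) (hg0 z)),
      ← mul_assoc]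
    exact mul_le_mul_of_nonneg_right (hle1 z) (hg0 z)
  have hIle : I ≤ A * I' := by
    rw [hIdef, hI'def, ← integral_const_mul]
    exact integral_mono hIntPx (hIntP'.const_mul A) hle1
  have hIge : A⁻¹ * I' ≤ I := by
    rw [hIdef, hI'def, ← integral_const_mul]
    refine integral_mono (hIntP'.const_mul A⁻¹) hIntPx fun z => ?_
    rw [inv_mul_le_iff₀ hA]
    exact hle2 z
  have hJge : A⁻¹ * J' ≤ J := by
    rw [hJdef, hJ'def, ← integral_const_mul]
    refine integral_mono (hIntP'g.const_mul A⁻¹) hIntPxg fun z => ?_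
    rw [inv_mul_le_iff₀ hA, ← mul_assoc]
    exact mul_le_mul_of_nonneg_right (hle2 z) (hg0 z)
  have hI : 0 < I := lt_of_lt_of_le (by positivity) hIge
  have h1 : (A * I')⁻¹ ≤ I⁻¹ := inv_anti₀ hI hIle
  calc A⁻¹ * A⁻¹ * ε ≤ A⁻¹ * A⁻¹ * (I'⁻¹ * J') :=
        mul_le_mul_of_nonneg_left hPI.le (by positivity)
    _ = (A * I')⁻¹ * (A⁻¹ * J') := by rw [mul_inv]; ring
    _ ≤ I⁻¹ * J := mul_le_mul h1 hJge (by positivity) (inv_nonneg.2 hI.le)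

end
end
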